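/- arXiv:1008.4878 — 9 statements merged into one kernel-verified Lean document; each statement's English description precedes it below -/
import Mathlib

section
/- Let (G,j,π) be an iterated extension of (KNP) by (PQR) whose Q-main extension (G,i,π) (with i := j∘i₀) has outer action θ, and set φ := φ̄∘π. Then the map sending λ ∈ Z^1(R,Z(K)^P) to the map G → G, g ↦ i(λ(φ(g)))·g, is a well-defined group isomorphism from Z^1(R,Z(K)^P) onto Aut(KNGQR); its inverse sends ξ ∈ Aut(KNGQR) to the unique λ with i(λ(r)) = ξ(u(r))·u(r)⁻¹ for all r, for any section u : R → G of φ with u(1) = 1. In particular Aut(KNGQR) is an abelian subgroup of Aut(G), independent (via this isomorphism) of the iterated extension. -/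
namespace IES

section OutDef

variable (K : Type*) [Group K]

/-- The subgroup of inner automorphisms of `K` inside `MulAut K`. -/
def Inn : Subgroup (MulAut K) := (MulAut.conj : K →* MulAut K).range

instance : (Inn K).Normal := by
  constructor
  rintro x ⟨k, rfl⟩ η
  refine ⟨η k, ?_⟩
  ext y
  simp [MulAut.conj_apply, MulAut.mul_apply, map_mul, map_inv]

/-- The outer automorphism group `Out K := Aut K / Inn K`. -/
abbrev Out := MulAut K ⧸ Inn K

/-- Canonical projection `Aut K → Out K`. -/
def toOut : MulAut K →* Out K := QuotientGroup.mk' (Inn K)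

lemma center_map (η : K ≃* K) {z : K} (hz : z ∈ Subgroup.center K) :
    η z ∈ Subgroup.center K := by
  rw [Subgroup.mem_center_iff] at hz ⊢
  intro g
  calc g * η z = η (η.symm g * z) := by rw [map_mul, η.apply_symm_apply]
    _ = η (z * η.symm g) := by rw [hz (η.symm g)]
    _ = η z * g := by rw [map_mul, η.apply_symm_apply]

/-- Restriction of automorphisms of `K` to its center. -/
def centerAut : MulAut K →* MulAut (Subgroup.center K) where
  toFun η :=
    { toFun := fun z => ⟨η z.1, center_map K η z.2⟩
      invFun := fun z => ⟨η.symm z.1, center_map K η.symm z.2⟩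
      left_inv := fun z => Subtype.ext (η.symm_apply_apply z.1)
      right_inv := fun z => Subtype.ext (η.apply_symm_apply z.1)
      map_mul' := fun a b => Subtype.ext (map_mul η a.1 b.1) }
  map_one' := by ext z; rfl
  map_mul' := fun a b => by ext z; rfl

lemma centerAut_inn : ∀ x ∈ Inn K, centerAut K x = 1 := by
  rintro x ⟨k, rfl⟩
  ext z
  have hz := z.2
  rw [Subgroup.mem_center_iff] at hz
  show k * z.1 * k⁻¹ = z.1
  rw [hz k, mul_inv_cancel_right]

/-- The action of `Out K` on the center of `K`. -/
def outCenter : Out K →* MulAut (Subgroup.center K) :=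
  QuotientGroup.lift (Inn K) (centerAut K) (centerAut_inn K)

end OutDef

section ModK

variable {K N : Type*} [Group K] [Group N]

/-- The group of automorphisms of `N` stabilizing the image of `K`. -/
def autK (i0 : K →* N) : Subgroup (MulAut N) where
  carrier := {η | ∀ n, η n ∈ i0.range ↔ n ∈ i0.range}
  one_mem' := by intro n; rw [MulAut.one_apply]
  mul_mem' := by
    intro a b ha hb n
    rw [MulAut.mul_apply]
    exact (ha (b n)).trans (hb n)
  inv_mem' := by
    intro a ha n
    have h := ha (a⁻¹ n)
    rw [MulAut.apply_inv_self] at h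
    exact h.symm

lemma mem_autK_iff {i0 : K →* N} {η : MulAut N} :
    η ∈ autK i0 ↔ ∀ n, η n ∈ i0.range ↔ n ∈ i0.range := Iff.rfl

/-- The subgroup of `autK i0` of inner automorphisms induced by elements of `i0 K`. -/
def cInn (i0 : K →* N) : Subgroup (autK i0) where
  carrier := {η | ∃ k : K, (η : MulAut N) = MulAut.conj (i0 k)}
  one_mem' := ⟨1, by simp⟩
  mul_mem' := by
    rintro a b ⟨k1, h1⟩ ⟨k2, h2⟩
    exact ⟨k1 * k2, by rw [Subgroup.coe_mul, h1, h2, ← map_mul, ← map_mul]⟩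
  inv_mem' := by
    rintro a ⟨k, h⟩
    exact ⟨k⁻¹, by rw [Subgroup.coe_inv, h, ← map_inv, ← map_inv]⟩

lemma conj_conj_eq (η : MulAut N) (x : N) :
    η * MulAut.conj x * η⁻¹ = MulAut.conj (η x) := by
  ext y
  simp [MulAut.conj_apply, MulAut.mul_apply, map_mul, map_inv]

instance (i0 : K →* N) : (cInn i0).Normal := by
  constructor
  rintro c ⟨k, hk⟩ g
  obtain ⟨k', hk'⟩ := (g.2 (i0 k)).mpr ⟨k, rfl⟩
  refine ⟨k', ?_⟩
  rw [Subgroup.coe_mul, Subgroup.coe_mul, Subgroup.coe_inv, hk, conj_conj_eq, hk']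

/-- The mod-`K` outer automorphism group `Out(N;K)`. -/
abbrev OutNK (i0 : K →* N) := ↥(autK i0) ⧸ cInn i0

/-- Canonical projection onto the mod-`K` outer automorphism group. -/
def mkNK (i0 : K →* N) : ↥(autK i0) →* OutNK i0 := QuotientGroup.mk' (cInn i0)

end ModK


section Cocycles

variable {K P Q R : Type*} [Group K] [Group P] [Group Q] [Group R]

/-- Normalized 1-cocycles of `Q` with values in `Z(K)`, for the action induced by `θ`. -/
def IsZ1Q (θ : Q →* Out K) (lam : Q → ↥(Subgroup.center K)) : Prop :=
  lam 1 = 1 ∧ ∀ q1 q2 : Q, lam (q1 * q2) = lam q1 * outCenter K (θ q1) (lam q2)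

/-- Normalized 1-cocycles of `P` with values in `Z(K)`, for the action induced by `θ ∘ j̄`. -/
def IsZ1P (θ : Q →* Out K) (jb : P →* Q) (lam : P → ↥(Subgroup.center K)) : Prop :=
  lam 1 = 1 ∧ ∀ p1 p2 : P, lam (p1 * p2) = lam p1 * outCenter K (θ (jb p1)) (lam p2)

/-- Normalized 1-cocycles of `R` with values in `Z(K)^P`, where the action `θ₀` of `R`
is expressed via arbitrary `φ̄`-preimages in `Q`. -/
def IsZ1R (θ : Q →* Out K) (jb : P →* Q) (fb : Q →* R)
    (lam : R → ↥(Subgroup.center K)) : Prop :=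
  lam 1 = 1 ∧
  (∀ (r : R) (p : P), outCenter K (θ (jb p)) (lam r) = lam r) ∧
  ∀ q1 q2 : Q, lam (fb q1 * fb q2) = lam (fb q1) * outCenter K (θ q1) (lam (fb q2))

/-- Normalized 2-cocycles of `R` with values in `Z(K)^P`. -/
def IsZ2R (θ : Q →* Out K) (jb : P →* Q) (fb : Q →* R)
    (d : R → R → ↥(Subgroup.center K)) : Prop :=
  (∀ r : R, d 1 r = 1 ∧ d r 1 = 1) ∧
  (∀ (r1 r2 : R) (p : P), outCenter K (θ (jb p)) (d r1 r2) = d r1 r2) ∧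
  ∀ (q1 : Q) (r2 r3 : R),
    d (fb q1) r2 * d (fb q1 * r2) r3 = outCenter K (θ q1) (d r2 r3) * d (fb q1) (r2 * r3)

/-- The cohomology class of a 1-cocycle of `P` is fixed by the `R`-action. -/
def RFixed (θ : Q →* Out K) (jb : P →* Q) (lam : P → ↥(Subgroup.center K)) : Prop :=
  ∀ q : Q, ∃ z0 : ↥(Subgroup.center K), ∀ p p' : P,
    jb p' = q⁻¹ * jb p * q →
      outCenter K (θ q) (lam p') = z0⁻¹ * outCenter K (θ (jb p)) z0 * lam p

end Cocycles

/-- For an iterated extension `(G,j,π)` of `(KNP)` by `(PQR)` whose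
`Q`-main extension has outer action `θ`, the map `λ ↦ (g ↦ i(λ(φ g))·g)` is a
well-defined group isomorphism `Z¹(R, Z(K)^P) ≃ Aut(KNGQR)`, with inverse given by
`ξ ↦ (r ↦ ξ(u r)·(u r)⁻¹)` for any section `u` of `φ`; in particular `Aut(KNGQR)` is
abelian. -/
theorem statement0
    {K P Q R N G : Type*} [Group K] [Group P] [Group Q] [Group R] [Group N] [Group G]
    (i0 : K →* N) (π0 : N →* P) (jb : P →* Q) (fb : Q →* R)
    (j : N →* G) (π : G →* Q) (θ : Q →* Out K)
    (hi0 : Function.Injective i0) (hπ0 : Function.Surjective π0)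
    (hker0 : i0.range = π0.ker)
    (hjb : Function.Injective jb) (hfb : Function.Surjective fb)
    (hker1 : jb.range = fb.ker)
    (hj : Function.Injective j) (hπ : Function.Surjective π)
    (hcomm : π.comp j = jb.comp π0)
    (hkerφ : j.range = (fb.comp π).ker)
    (hkerπ : (j.comp i0).range = π.ker)
    (hθ : ∀ (g : G) (κ : MulAut K),
      (∀ k, (j.comp i0) (κ k) = g * (j.comp i0) k * g⁻¹) → θ (π g) = toOut K κ) :
    -- well-definedness: each cocycle gives an automorphism of the iterated extension
    (∀ lam : R → ↥(Subgroup.center K), IsZ1R θ jb fb lam →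
      ∃ ξ : MulAut G, (∀ g : G, ξ g = (j.comp i0) (lam (fb (π g)) : K) * g) ∧
        (∀ n, ξ (j n) = j n) ∧ (∀ g, π (ξ g) = π g)) ∧
    -- injectivity
    (∀ lam1 lam2 : R → ↥(Subgroup.center K), IsZ1R θ jb fb lam1 → IsZ1R θ jb fb lam2 →
      (∀ g : G, (j.comp i0) (lam1 (fb (π g)) : K) * g = (j.comp i0) (lam2 (fb (π g)) : K) * g) →
      lam1 = lam2) ∧
    -- the map is a homomorphism: pointwise products of cocycles are cocycles and are
    -- sent to composites
    (∀ lam1 lam2 : R → ↥(Subgroup.center K), IsZ1R θ jb fb lam1 → IsZ1R θ jb fb lam2 →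
      IsZ1R θ jb fb (fun r => lam1 r * lam2 r) ∧
      ∀ g : G, (j.comp i0) ((fun r => lam1 r * lam2 r) (fb (π g)) : K) * g =
        (j.comp i0) (lam1 (fb (π ((j.comp i0) (lam2 (fb (π g)) : K) * g))) : K) *
          ((j.comp i0) (lam2 (fb (π g)) : K) * g)) ∧
    -- surjectivity onto Aut(KNGQR)
    (∀ ξ : MulAut G, (∀ n, ξ (j n) = j n) → (∀ g, π (ξ g) = π g) →
      ∃ lam : R → ↥(Subgroup.center K), IsZ1R θ jb fb lam ∧
        ∀ g : G, ξ g = (j.comp i0) (lam (fb (π g)) : K) * g) ∧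
    -- inverse formula, via any section u of φ with u 1 = 1
    (∀ u : R → G, (∀ r, fb (π (u r)) = r) → u 1 = 1 →
      ∀ (ξ : MulAut G) (lam : R → ↥(Subgroup.center K)), IsZ1R θ jb fb lam →
        (∀ g : G, ξ g = (j.comp i0) (lam (fb (π g)) : K) * g) →
        ∀ r : R, ((j.comp i0) (lam r : K) : G) = ξ (u r) * (u r)⁻¹) ∧
    -- Aut(KNGQR) is abelian
    (∀ ξ1 ξ2 : MulAut G, (∀ n, ξ1 (j n) = j n) → (∀ g, π (ξ1 g) = π g) →
      (∀ n, ξ2 (j n) = j n) → (∀ g, π (ξ2 g) = π g) → ξ1 * ξ2 = ξ2 * ξ1) := by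
  set i : K →* G := j.comp i0 with hi_def
  have hi : Function.Injective i := hj.comp hi0
  have hπi : ∀ k, π (i k) = 1 := by
    intro k
    have : i k ∈ π.ker := hkerπ ▸ ⟨k, rfl⟩
    exact this
  -- conjugation automorphism
  have hconj : ∀ g : G, ∃ κ : MulAut K, ∀ k, i (κ k) = g * i k * g⁻¹ := by
    have hmem : ∀ (g : G) (k : K), ∃ k', i k' = g * i k * g⁻¹ := by
      intro g k
      have hk : g * i k * g⁻¹ ∈ π.ker := by
        simp [MonoidHom.mem_ker, map_mul, hπi]
      rw [← hkerπ] at hk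
      exact hk
    choose f hf using hmem
    intro g
    have hfhom : ∀ g a b, f g (a * b) = f g a * f g b := by
      intro g a b
      apply hi
      rw [map_mul, hf, hf, hf, map_mul]
      group
    have hinv : ∀ g k, f g (f g⁻¹ k) = k := by
      intro g k
      apply hi
      rw [hf, hf]
      group
    refine ⟨⟨⟨f g, f g⁻¹, ?_, hinv g⟩, hfhom g⟩, hf g⟩
    intro k
    have h := hinv g⁻¹ k
    rwa [inv_inv] at h
  -- the action of θ on the center realized by conjugation
  have hact : ∀ (g : G) (z : ↥(Subgroup.center K)),
      i ((outCenter K (θ (π g)) z : K)) = g * i (z : K) * g⁻¹ := by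
    intro g z
    obtain ⟨κ, hκ⟩ := hconj g
    rw [hθ g κ hκ]
    have h1 : outCenter K (toOut K κ) z = centerAut K κ z := rfl
    rw [h1]
    exact hκ z.1
  have hπj : ∀ n, π (j n) = jb (π0 n) := fun n => DFunLike.congr_fun hcomm n
  -- values fixed by P commute with j(N)
  have hfixcomm : ∀ (z : ↥(Subgroup.center K)),
      (∀ p : P, outCenter K (θ (jb p)) z = z) →
      ∀ n : N, j n * i (z : K) * (j n)⁻¹ = i (z : K) := by
    intro z hfix n
    have h := hact (j n) z
    rw [hπj n, hfix (π0 n)] at h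
    exact h.symm
  have hφπ : Function.Surjective (fun g : G => fb (π g)) := fun r => by
    obtain ⟨q, hq⟩ := hfb r
    obtain ⟨g, hg⟩ := hπ q
    exact ⟨g, by simp [hg, hq]⟩
  -- surjectivity, proved first so it can be reused for commutativity
  have hsurj : ∀ ξ : MulAut G, (∀ n, ξ (j n) = j n) → (∀ g, π (ξ g) = π g) →
      ∃ lam : R → ↥(Subgroup.center K), IsZ1R θ jb fb lam ∧
        ∀ g : G, ξ g = i (lam (fb (π g)) : K) * g := by
    intro ξ hξj hξπ
    have hmem : ∀ g : G, ∃ k, i k = ξ g * g⁻¹ := by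
      intro g
      have hk : ξ g * g⁻¹ ∈ π.ker := by
        simp [MonoidHom.mem_ker, map_mul, map_inv, hξπ]
      rw [← hkerπ] at hk
      exact hk
    choose kf hkf using hmem
    have hξeq : ∀ g, ξ g = i (kf g) * g := by
      intro g
      rw [hkf g, inv_mul_cancel_right]
    -- i (kf g) commutes with j(N)
    have hcommN : ∀ g n, j n * i (kf g) = i (kf g) * j n := by
      intro g n
      have hnorm : g⁻¹ * j n * g ∈ j.range := by
        rw [hkerφ]
        have hmemn : j n ∈ (fb.comp π).ker := hkerφ ▸ ⟨n, rfl⟩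
        have := ((fb.comp π).normal_ker).conj_mem (j n) hmemn g⁻¹
        simpa using this
      obtain ⟨m, hm⟩ := hnorm
      have h1 : ξ (j n * g) = j n * (i (kf g) * g) := by
        rw [map_mul, hξj n, hξeq g]
      have h2 : ξ (j n * g) = i (kf g) * (j n * g) := by
        have hng : j n * g = g * j m := by rw [hm]; group
        rw [hng, map_mul, hξj m, hξeq g, hm]
        group
      have h3 := h1.symm.trans h2
      rw [← mul_assoc, ← mul_assoc] at h3
      exact mul_right_cancel h3
    have hcent : ∀ g, kf g ∈ Subgroup.center K := by
      intro g
      rw [Subgroup.mem_center_iff]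
      intro a
      apply hi
      rw [map_mul, map_mul]
      have := hcommN g (i0 a)
      simpa [hi_def] using this
    have hdep : ∀ g1 g2 : G, fb (π g1) = fb (π g2) → kf g1 = kf g2 := by
      intro g1 g2 hr
      have hmemn : g2 * g1⁻¹ ∈ j.range := by
        rw [hkerφ]
        simp [MonoidHom.mem_ker, map_mul, map_inv, hr]
      obtain ⟨n, hn⟩ := hmemn
      apply hi
      have hg2 : g2 = j n * g1 := by rw [hn]; group
      symm
      calc i (kf g2) = ξ g2 * g2⁻¹ := hkf g2
        _ = (j n * (i (kf g1) * g1)) * (g1⁻¹ * (j n)⁻¹) := by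
              rw [hg2, map_mul, hξj n, ← hξeq g1, mul_inv_rev]
        _ = j n * i (kf g1) * (j n)⁻¹ := by group
        _ = i (kf g1) * j n * (j n)⁻¹ := by rw [hcommN g1 n]
        _ = i (kf g1) := by group
    choose u hu using hφπ
    have hu' : ∀ r, fb (π (u r)) = r := hu
    refine ⟨fun r => ⟨kf (u r), hcent (u r)⟩, ⟨?_, ?_, ?_⟩, ?_⟩
    · have h1 : kf (u 1) = kf 1 := hdep _ _ (by rw [hu' 1]; simp)
      have h2 : i (kf 1) = i 1 := by rw [hkf]; simp
      exact Subtype.ext (h1.trans (hi h2))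
    · intro r p
      obtain ⟨n, hn⟩ := hπ0 p
      apply Subtype.ext
      apply hi
      have h := hact (j n) ⟨kf (u r), hcent (u r)⟩
      rw [hπj n, hn] at h
      rw [h, hcommN (u r) n]
      group
    · intro q1 q2
      obtain ⟨g1, hg1⟩ := hπ q1
      obtain ⟨g2, hg2⟩ := hπ q2
      have key : ξ (g1 * g2) = ξ g1 * ξ g2 := map_mul ξ g1 g2
      rw [hξeq (g1 * g2), hξeq g1, hξeq g2] at key
      have hr12 : kf (u (fb q1 * fb q2)) = kf (g1 * g2) :=
        hdep _ _ (by rw [hu', map_mul, map_mul, hg1, hg2])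
      have hr1 : kf (u (fb q1)) = kf g1 := hdep _ _ (by rw [hu', hg1])
      have hr2 : kf (u (fb q2)) = kf g2 := hdep _ _ (by rw [hu', hg2])
      apply Subtype.ext
      apply hi
      have hz : i ((outCenter K (θ q1) ⟨kf (u (fb q2)), hcent (u (fb q2))⟩ : K)) =
          g1 * i (kf (u (fb q2))) * g1⁻¹ := by
        have h := hact g1 ⟨kf (u (fb q2)), hcent (u (fb q2))⟩
        rwa [hg1] at h
      show i (kf (u (fb q1 * fb q2))) = i (kf (u (fb q1)) *
        ((outCenter K (θ q1) ⟨kf (u (fb q2)), hcent (u (fb q2))⟩ : ↥(Subgroup.center K)) : K))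
      rw [map_mul, hz, hr12, hr1, hr2]
      have h3 : i (kf (g1 * g2)) = (i (kf g1) * g1 * (i (kf g2) * g2)) * (g1 * g2)⁻¹ := by
        rw [← key]; group
      rw [h3]
      group
    · intro g
      rw [hξeq g]
      congr 2
      exact hdep _ _ (by rw [hu'])
  refine ⟨?_, ?_, ?_, hsurj, ?_, ?_⟩
  · -- well-definedness
    rintro lam ⟨h1, hfix, hcoc⟩
    have hπξ : ∀ g : G, π (i (lam (fb (π g)) : K) * g) = π g := by
      intro g; rw [map_mul, hπi, one_mul]
    have hmul : ∀ a b : G, i (lam (fb (π (a * b))) : K) * (a * b) =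
        (i (lam (fb (π a)) : K) * a) * (i (lam (fb (π b)) : K) * b) := by
      intro a b
      have hc := hcoc (π a) (π b)
      rw [map_mul, map_mul, hc]
      have hz := hact a (lam (fb (π b)))
      rw [Subgroup.coe_mul, map_mul, hz]
      group
    refine ⟨⟨⟨fun g => i (lam (fb (π g)) : K) * g,
      fun g => (i (lam (fb (π g)) : K))⁻¹ * g, ?_, ?_⟩, hmul⟩, fun g => rfl, ?_, ?_⟩
    · intro g
      show (i (lam (fb (π (i (lam (fb (π g)) : K) * g))) : K))⁻¹ *
        (i (lam (fb (π g)) : K) * g) = g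
      rw [hπξ g]
      group
    · intro g
      have hp : π ((i (lam (fb (π g)) : K))⁻¹ * g) = π g := by
        rw [map_mul, map_inv, hπi, inv_one, one_mul]
      show i (lam (fb (π ((i (lam (fb (π g)) : K))⁻¹ * g))) : K) *
        ((i (lam (fb (π g)) : K))⁻¹ * g) = g
      rw [hp]
      group
    · intro n
      show i (lam (fb (π (j n))) : K) * j n = j n
      rw [hπj n]
      have : fb (jb (π0 n)) = 1 := by
        have : jb (π0 n) ∈ fb.ker := hker1 ▸ ⟨π0 n, rfl⟩
        exact this
      rw [this, h1]
      simp
    · exact hπξ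
  · -- injectivity
    intro lam1 lam2 _ _ heq
    funext r
    obtain ⟨g, hg⟩ := hφπ r
    have := mul_right_cancel (heq g)
    apply Subtype.ext
    simp only [hg] at this
    exact hi this
  · -- homomorphism
    rintro lam1 lam2 ⟨h11, h1f, h1c⟩ ⟨h21, h2f, h2c⟩
    refine ⟨⟨?_, ?_, ?_⟩, ?_⟩
    · show lam1 1 * lam2 1 = 1
      rw [h11, h21, one_mul]
    · intro r p
      show outCenter K (θ (jb p)) (lam1 r * lam2 r) = lam1 r * lam2 r
      rw [map_mul, h1f r p, h2f r p]
    · intro q1 q2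
      show lam1 (fb q1 * fb q2) * lam2 (fb q1 * fb q2) =
        lam1 (fb q1) * lam2 (fb q1) * outCenter K (θ q1) (lam1 (fb q2) * lam2 (fb q2))
      rw [h1c, h2c, map_mul]
      have hc : ∀ a b : ↥(Subgroup.center K), a * b = b * a :=
        fun a b => Subtype.ext (Subgroup.mem_center_iff.mp b.2 a.1)
      simp only [mul_assoc]
      congr 1
      rw [← mul_assoc, ← mul_assoc, hc (outCenter K (θ q1) (lam1 (fb q2))) (lam2 (fb q1))]
    intro g
    have hπ2 : π (i (lam2 (fb (π g)) : K) * g) = π g := by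
      rw [map_mul, hπi, one_mul]
    rw [hπ2]
    show i ((lam1 (fb (π g)) * lam2 (fb (π g)) : ↥(Subgroup.center K)) : K) * g =
      i (lam1 (fb (π g)) : K) * (i (lam2 (fb (π g)) : K) * g)
    rw [Subgroup.coe_mul, map_mul]
    group
  · -- inverse formula
    intro u hu _ ξ lam _ hξ r
    rw [hξ (u r), hu r]
    group
  · -- abelian
    intro ξ1 ξ2 h1j h1π h2j h2π
    obtain ⟨lam1, ⟨_, _, _⟩, he1⟩ := hsurj ξ1 h1j h1π
    obtain ⟨lam2, ⟨_, _, _⟩, he2⟩ := hsurj ξ2 h2j h2π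
    have hπz : ∀ (z : K) (g : G), π (i z * g) = π g := by
      intro z g; rw [map_mul, hπi, one_mul]
    ext g
    show ξ1 (ξ2 g) = ξ2 (ξ1 g)
    rw [he1 (ξ2 g), he2 g, he2 (ξ1 g), he1 g, hπz, hπz, ← mul_assoc, ← mul_assoc,
      ← map_mul, ← map_mul]
    congr 2
    exact Subgroup.mem_center_iff.mp (lam2 (fb (π g))).2 (lam1 (fb (π g))).1

end IES
end

section
/- Let (G,j,π) be an iterated extension of (KNP) by (PQR) whose Q-main extension (G,i,π) (with i := j∘i₀) has outer action θ. The group isomorphism Z^1(R,Z(K)^P) ≅ Aut(KNGQR), λ ↦ (g ↦ i(λ(φ̄(π(g))))·g), restricts to an isomorphism of B^1(R,Z(K)^P) onto 𝒞_G(Z(K)^P), the group of inner automorphisms of G induced by elements of i(Z(K)^P), sending the coboundary ∂z₀ (for z₀ ∈ Z(K)^P) to conjugation by i(z₀)⁻¹. -/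
namespace IES

/-- Key lemma: the action of `θ (π g)` on the center of `K` is realized, through `i = j ∘ i0`,
by conjugation by `g` in `G`. -/
lemma key_conj {K N G Q : Type*} [Group K] [Group N] [Group G] [Group Q]
    (i0 : K →* N) (j : N →* G) (π : G →* Q) (θ : Q →* Out K)
    (hi : Function.Injective (j.comp i0))
    (hkerπ : (j.comp i0).range = π.ker)
    (hθ : ∀ (g : G) (κ : MulAut K),
      (∀ k, (j.comp i0) (κ k) = g * (j.comp i0) k * g⁻¹) → θ (π g) = toOut K κ)
    (g : G) (z : ↥(Subgroup.center K)) :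
    (j.comp i0) ((outCenter K (θ (π g)) z : ↥(Subgroup.center K)) : K)
      = g * (j.comp i0) (z : K) * g⁻¹ := by
  set i := j.comp i0 with hidef
  have hmem : ∀ (g : G) (k : K), ∃ k', i k' = g * i k * g⁻¹ := by
    intro g k
    have hik : i k ∈ π.ker := hkerπ ▸ ⟨k, rfl⟩
    have : g * i k * g⁻¹ ∈ π.ker := by
      rw [MonoidHom.mem_ker] at hik ⊢
      simp [map_mul, hik]
    rw [← hkerπ] at this
    exact this
  set f : G → K → K := fun g k => (hmem g k).choose with hfdef
  have hf : ∀ (g : G) (k : K), i (f g k) = g * i k * g⁻¹ := fun g k => (hmem g k).choose_spec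
  have hmul : ∀ (g : G) (k1 k2 : K), f g (k1 * k2) = f g k1 * f g k2 := by
    intro g k1 k2
    apply hi
    rw [map_mul, hf, hf, hf, map_mul]
    group
  have hbij : ∀ g : G, Function.Bijective (f g) := by
    intro g
    constructor
    · intro k1 k2 h
      apply hi
      have := congrArg i h
      rw [hf, hf] at this
      exact mul_left_cancel (mul_right_cancel this)
    · intro k
      refine ⟨f g⁻¹ k, hi ?_⟩
      rw [hf, hf]
      group
  set κ : G → MulAut K := fun g => MulEquiv.ofBijective (MonoidHom.mk' (f g) (hmul g)) (hbij g)
    with hκdef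
  have hθg : θ (π g) = toOut K (κ g) := hθ g (κ g) (fun k => hf g k)
  have houter : outCenter K (θ (π g)) z = centerAut K (κ g) z := by
    rw [hθg]; rfl
  rw [houter]
  exact hf g (z : K)

/-- The isomorphism `Z¹(R,Z(K)^P) ≃ Aut(KNGQR)` restricts to an
isomorphism of `B¹(R,Z(K)^P)` onto the group of inner automorphisms of `G` induced by
elements of `i(Z(K)^P)`, sending the coboundary `∂z₀` to conjugation by `i(z₀)⁻¹`. -/
theorem statement1
    {K P Q R N G : Type*} [Group K] [Group P] [Group Q] [Group R] [Group N] [Group G]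
    (i0 : K →* N) (π0 : N →* P) (jb : P →* Q) (fb : Q →* R)
    (j : N →* G) (π : G →* Q) (θ : Q →* Out K)
    (hi0 : Function.Injective i0) (hπ0 : Function.Surjective π0)
    (hker0 : i0.range = π0.ker)
    (hjb : Function.Injective jb) (hfb : Function.Surjective fb)
    (hker1 : jb.range = fb.ker)
    (hj : Function.Injective j) (hπ : Function.Surjective π)
    (hcomm : π.comp j = jb.comp π0)
    (hkerφ : j.range = (fb.comp π).ker)
    (hkerπ : (j.comp i0).range = π.ker)
    (hθ : ∀ (g : G) (κ : MulAut K),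
      (∀ k, (j.comp i0) (κ k) = g * (j.comp i0) k * g⁻¹) → θ (π g) = toOut K κ) :
    -- for z₀ ∈ Z(K)^P, the coboundary ∂z₀ exists, is a cocycle, and is sent to
    -- conjugation by i(z₀)⁻¹
    (∀ z0 : ↥(Subgroup.center K), (∀ p : P, outCenter K (θ (jb p)) z0 = z0) →
      (∃ dz : R → ↥(Subgroup.center K),
          ∀ q : Q, dz (fb q) = z0⁻¹ * outCenter K (θ q) z0) ∧
      (∀ dz : R → ↥(Subgroup.center K),
        (∀ q : Q, dz (fb q) = z0⁻¹ * outCenter K (θ q) z0) →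
        IsZ1R θ jb fb dz ∧
        ∀ g : G, (j.comp i0) (dz (fb (π g)) : K) * g =
          ((j.comp i0) (z0 : K))⁻¹ * g * (j.comp i0) (z0 : K))) ∧
    -- a cocycle is sent into the inner automorphisms induced by i(Z(K)^P) iff it is
    -- a coboundary
    (∀ lam : R → ↥(Subgroup.center K), IsZ1R θ jb fb lam →
      ((∃ z0 : ↥(Subgroup.center K), (∀ p : P, outCenter K (θ (jb p)) z0 = z0) ∧
          ∀ g : G, (j.comp i0) (lam (fb (π g)) : K) * g =
            (j.comp i0) (z0 : K) * g * ((j.comp i0) (z0 : K))⁻¹) ↔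
       (∃ z0 : ↥(Subgroup.center K), (∀ p : P, outCenter K (θ (jb p)) z0 = z0) ∧
          ∀ q : Q, lam (fb q) = z0⁻¹ * outCenter K (θ q) z0))) := by
  have hi : Function.Injective (j.comp i0) := fun a b h => hi0 (hj h)
  have key : ∀ (g : G) (z : ↥(Subgroup.center K)),
      (j.comp i0) ((outCenter K (θ (π g)) z : ↥(Subgroup.center K)) : K)
        = g * (j.comp i0) (z : K) * g⁻¹ :=
    key_conj i0 j π θ hi hkerπ hθ
  have amul : ∀ (q1 q2 : Q) (z : ↥(Subgroup.center K)),
      outCenter K (θ (q1 * q2)) z = outCenter K (θ q1) (outCenter K (θ q2) z) := by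
    intro q1 q2 z
    rw [map_mul, map_mul]
    rfl
  have hnormal : ∀ (q : Q) (p : P), ∃ p' : P, jb p * q = q * jb p' := by
    intro q p
    have hjbp : fb (jb p) = 1 := by
      rw [← MonoidHom.mem_ker, ← hker1]; exact ⟨p, rfl⟩
    have : q⁻¹ * jb p * q ∈ fb.ker := by
      rw [MonoidHom.mem_ker]
      simp [map_mul, hjbp]
    rw [← hker1] at this
    obtain ⟨p', hp'⟩ := this
    exact ⟨p', by rw [hp']; group⟩
  have hPtrans : ∀ (z0 : ↥(Subgroup.center K)),
      (∀ p : P, outCenter K (θ (jb p)) z0 = z0) →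
      ∀ (q : Q) (p : P),
        outCenter K (θ (jb p)) (outCenter K (θ q) z0) = outCenter K (θ q) z0 := by
    intro z0 hz0 q p
    obtain ⟨p', hp'⟩ := hnormal q p
    rw [← amul, hp', amul, hz0]
  have haq : ∀ (z0 : ↥(Subgroup.center K)),
      (∀ p : P, outCenter K (θ (jb p)) z0 = z0) →
      ∀ q q' : Q, fb q = fb q' → outCenter K (θ q) z0 = outCenter K (θ q') z0 := by
    intro z0 hz0 q q' h
    have : q⁻¹ * q' ∈ fb.ker := by
      rw [MonoidHom.mem_ker, map_mul, map_inv, ← h]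
      group
    rw [← hker1] at this
    obtain ⟨p, hp⟩ := this
    have hq' : q' = q * jb p := by rw [hp]; group
    rw [hq', amul, hz0]
  constructor
  · intro z0 hz0
    constructor
    · refine ⟨fun r => z0⁻¹ * outCenter K (θ (Function.surjInv hfb r)) z0, fun q => ?_⟩
      exact congrArg (fun w => z0⁻¹ * w)
        (haq z0 hz0 _ q (Function.surjInv_eq hfb (fb q)))
    · intro dz hdz
      constructor
      · refine ⟨?_, ?_, ?_⟩
        · have h1 := hdz 1
          rw [map_one] at h1
          rw [h1]
          simp
        · intro r p
          obtain ⟨q, rfl⟩ := hfb r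
          rw [hdz, map_mul, map_inv, hz0, hPtrans z0 hz0]
        · intro q1 q2
          have h12 : fb q1 * fb q2 = fb (q1 * q2) := (map_mul fb q1 q2).symm
          rw [h12, hdz, hdz, hdz, amul, map_mul, map_inv]
          group
      · intro g
        rw [hdz (π g)]
        have hcoe : ((z0⁻¹ * outCenter K (θ (π g)) z0 : ↥(Subgroup.center K)) : K)
            = (z0 : K)⁻¹ * ((outCenter K (θ (π g)) z0 : ↥(Subgroup.center K)) : K) := rfl
        rw [hcoe, map_mul, map_inv, key]
        group
  · intro lam hlam
    constructor
    · rintro ⟨z0, hz0fix, hz0⟩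
      refine ⟨z0⁻¹, fun p => by rw [map_inv, hz0fix], fun q => ?_⟩
      obtain ⟨g, rfl⟩ := hπ q
      refine Subtype.ext (hi ?_)
      have hL : (j.comp i0) ((lam (fb (π g)) : K))
          = (j.comp i0) (z0 : K) * g * ((j.comp i0) (z0 : K))⁻¹ * g⁻¹ := by
        calc (j.comp i0) ((lam (fb (π g)) : K))
            = ((j.comp i0) ((lam (fb (π g)) : K)) * g) * g⁻¹ := by group
          _ = ((j.comp i0) (z0 : K) * g * ((j.comp i0) (z0 : K))⁻¹) * g⁻¹ := by rw [hz0 g]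
      have hcoe : (((z0⁻¹)⁻¹ * outCenter K (θ (π g)) z0⁻¹ : ↥(Subgroup.center K)) : K)
          = (z0 : K) * ((outCenter K (θ (π g)) z0⁻¹ : ↥(Subgroup.center K)) : K) := by
        rw [inv_inv]; rfl
      have hcoeinv : ((z0⁻¹ : ↥(Subgroup.center K)) : K) = (z0 : K)⁻¹ := rfl
      rw [hL, hcoe, map_mul, key g z0⁻¹, hcoeinv, map_inv]
      group
    · rintro ⟨z0, hz0fix, hz0⟩
      refine ⟨z0⁻¹, fun p => by rw [map_inv, hz0fix], fun g => ?_⟩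
      rw [hz0 (π g)]
      have hcoe : ((z0⁻¹ * outCenter K (θ (π g)) z0 : ↥(Subgroup.center K)) : K)
          = (z0 : K)⁻¹ * ((outCenter K (θ (π g)) z0 : ↥(Subgroup.center K)) : K) := rfl
      have hcoeinv : ((z0⁻¹ : ↥(Subgroup.center K)) : K) = (z0 : K)⁻¹ := rfl
      rw [hcoe, map_mul, map_inv, key, hcoeinv, map_inv]
      group

end IES
end

section
/- Let (G,j,π) be an iterated extension of (KNP) by (PQR) whose Q-main extension (G,i,π) (with i := j∘i₀) has outer action θ. The group isomorphism Z^1(R,Z(K)^P) ≅ Aut(KNGQR), λ ↦ (g ↦ i(λ(φ̄(π(g))))·g), induces a group isomorphism from H^1(R,Z(K)^P) onto Out(KNGQR;K) := Aut(KNGQR)/𝒞_G(Z(K)^P), where 𝒞_G(Z(K)^P) is the group of inner automorphisms of G induced by elements of i(Z(K)^P); moreover 𝒞_G(Z(K)^P) equals the intersection of Aut(KNGQR) with the group of inner automorphisms of G induced by elements of i(K). -/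
namespace IES

/-- The isomorphism `Z¹(R,Z(K)^P) ≃ Aut(KNGQR)` induces a group
isomorphism `H¹(R,Z(K)^P) ≃ Out(KNGQR;K) = Aut(KNGQR)/𝒞_G(Z(K)^P)`; moreover
`𝒞_G(Z(K)^P) = 𝒞_G(K) ∩ Aut(KNGQR)`. -/
theorem statement2
    {K P Q R N G : Type*} [Group K] [Group P] [Group Q] [Group R] [Group N] [Group G]
    (i0 : K →* N) (π0 : N →* P) (jb : P →* Q) (fb : Q →* R)
    (j : N →* G) (π : G →* Q) (θ : Q →* Out K)
    (hi0 : Function.Injective i0) (hπ0 : Function.Surjective π0)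
    (hker0 : i0.range = π0.ker)
    (hjb : Function.Injective jb) (hfb : Function.Surjective fb)
    (hker1 : jb.range = fb.ker)
    (hj : Function.Injective j) (hπ : Function.Surjective π)
    (hcomm : π.comp j = jb.comp π0)
    (hkerφ : j.range = (fb.comp π).ker)
    (hkerπ : (j.comp i0).range = π.ker)
    (hθ : ∀ (g : G) (κ : MulAut K),
      (∀ k, (j.comp i0) (κ k) = g * (j.comp i0) k * g⁻¹) → θ (π g) = toOut K κ) :
    -- surjectivity of Z¹ onto Aut(KNGQR) (so that the quotient map is onto)
    (∀ ξ : MulAut G, (∀ n, ξ (j n) = j n) → (∀ g, π (ξ g) = π g) →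
      ∃ lam : R → ↥(Subgroup.center K), IsZ1R θ jb fb lam ∧
        ∀ g : G, ξ g = (j.comp i0) (lam (fb (π g)) : K) * g) ∧
    -- two cocycles have images differing by an inner automorphism induced by an
    -- element of i(Z(K)^P) iff they are cohomologous: the induced map on the
    -- quotients H¹(R,Z(K)^P) → Aut(KNGQR)/𝒞_G(Z(K)^P) is a bijection
    (∀ lam1 lam2 : R → ↥(Subgroup.center K), IsZ1R θ jb fb lam1 → IsZ1R θ jb fb lam2 →
      ((∃ z : ↥(Subgroup.center K), (∀ p : P, outCenter K (θ (jb p)) z = z) ∧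
          ∀ g : G, (j.comp i0) (lam2 (fb (π g)) : K) * g =
            (j.comp i0) (z : K) * ((j.comp i0) (lam1 (fb (π g)) : K) * g) *
              ((j.comp i0) (z : K))⁻¹) ↔
       (∃ z0 : ↥(Subgroup.center K), (∀ p : P, outCenter K (θ (jb p)) z0 = z0) ∧
          ∀ q : Q, lam2 (fb q) = lam1 (fb q) * (z0⁻¹ * outCenter K (θ q) z0)))) ∧
    -- 𝒞_G(Z(K)^P) is the intersection of Aut(KNGQR) with the inner automorphisms of G
    -- induced by elements of i(K)
    (∀ ξ : MulAut G, (∀ n, ξ (j n) = j n) → (∀ g, π (ξ g) = π g) →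
      ((∃ z : ↥(Subgroup.center K), (∀ p : P, outCenter K (θ (jb p)) z = z) ∧
          ∀ g : G, ξ g = (j.comp i0) (z : K) * g * ((j.comp i0) (z : K))⁻¹) ↔
       (∃ k : K, ∀ g : G, ξ g = (j.comp i0) k * g * ((j.comp i0) k)⁻¹))) := by
  classical
  set i := j.comp i0 with hidef
  have hi : Function.Injective i := hj.comp hi0
  have hπi : ∀ k : K, π (i k) = 1 := by
    intro k
    have h1 : i k ∈ i.range := ⟨k, rfl⟩
    rw [hkerπ] at h1
    exact h1
  -- conjugation by g preserves i(K)
  have hmem : ∀ (g : G) (k : K), ∃ k', i k' = g * i k * g⁻¹ := by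
    intro g k
    have h1 : π (g * i k * g⁻¹) = 1 := by
      rw [map_mul, map_mul, hπi, map_inv]
      group
    have h2 : g * i k * g⁻¹ ∈ i.range := by
      rw [hkerπ]
      exact h1
    exact h2
  choose f hf using hmem
  have hff : ∀ (g : G) (k : K), f g (f g⁻¹ k) = k := by
    intro g k
    apply hi
    rw [hf, hf]
    group
  have hff' : ∀ (g : G) (k : K), f g⁻¹ (f g k) = k := by
    intro g k
    apply hi
    rw [hf, hf]
    group
  let κ : G → MulAut K := fun g =>
    { toFun := f g, invFun := f g⁻¹, left_inv := hff' g, right_inv := hff g,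
      map_mul' := fun a b => hi (by rw [hf, map_mul, map_mul, hf, hf]; group) }
  have hθκ : ∀ g : G, θ (π g) = toOut K (κ g) := fun g => hθ g (κ g) (fun k => hf g k)
  have houtc : ∀ (g : G) (z : ↥(Subgroup.center K)),
      ((outCenter K (θ (π g)) z : K)) = f g (z : K) := by
    intro g z
    rw [hθκ]
    rfl
  have houtp : ∀ (n : N) (z : ↥(Subgroup.center K)),
      ((outCenter K (θ (jb (π0 n))) z : K)) = f (j n) (z : K) := by
    intro n z
    have h1 : jb (π0 n) = π (j n) := (DFunLike.congr_fun hcomm n).symm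
    rw [h1, houtc]
  refine ⟨?_, ?_, ?_⟩
  · -- Part 1: surjectivity of Z¹ onto Aut(KNGQR)
    intro ξ hξj hξπ
    have hξi : ∀ k : K, ξ (i k) = i k := fun k => hξj (i0 k)
    have hmem2 : ∀ g : G, ∃ k, i k = ξ g * g⁻¹ := by
      intro g
      have h1 : π (ξ g * g⁻¹) = 1 := by
        rw [map_mul, map_inv, hξπ]
        group
      have h2 : ξ g * g⁻¹ ∈ i.range := by
        rw [hkerπ]
        exact h1
      exact h2
    choose c hc using hmem2
    have hgc : ∀ g, ξ g = i (c g) * g := by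
      intro g
      rw [hc]
      group
    have hcw : ∀ g1 g2 : G, fb (π g1) = fb (π g2) → c g1 = c g2 := by
      intro g1 g2 hEq
      have h1 : (fb.comp π) (g1⁻¹ * g2) = 1 := by
        simp only [MonoidHom.comp_apply, map_mul, map_inv, hEq, inv_mul_cancel]
      have h2 : g1⁻¹ * g2 ∈ j.range := by
        rw [hkerφ]
        exact h1
      obtain ⟨n, hn⟩ := h2
      have hg2 : g2 = g1 * j n := by rw [hn]; group
      apply hi
      rw [hc, hc, hg2, map_mul ξ g1 (j n), hξj n]
      group
    have hcent : ∀ g : G, c g ∈ Subgroup.center K := by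
      intro g
      rw [Subgroup.mem_center_iff]
      intro k
      have h1 : c (i k * g) = c g := by
        apply hcw
        rw [map_mul, hπi, one_mul]
      have h2 : i (c g) = i k * i (c g) * (i k)⁻¹ := by
        conv_lhs => rw [← h1]
        rw [hc, hc, map_mul ξ (i k) g, hξi]
        group
      apply hi
      rw [map_mul, map_mul]
      conv_rhs => rw [h2]
      group
    have hc1 : c 1 = 1 := by
      apply hi
      rw [hc]
      simp
    choose s hs using hfb.comp hπ
    set lam : R → ↥(Subgroup.center K) := fun r => ⟨c (s r), hcent _⟩ with hlamdef
    refine ⟨lam, ⟨?_, ?_, ?_⟩, ?_⟩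
    · apply Subtype.ext
      show c (s 1) = (1 : K)
      rw [← hc1]
      apply hcw
      rw [map_one, map_one]
      exact hs 1
    · intro r p
      obtain ⟨n, rfl⟩ := hπ0 p
      apply Subtype.ext
      rw [houtp]
      show f (j n) (c (s r)) = c (s r)
      have h1 : c (j n * s r) = c (s r) := by
        apply hcw
        have hπjn : π (j n) = jb (π0 n) := DFunLike.congr_fun hcomm n
        have hfbjb : fb (jb (π0 n)) = 1 := by
          have h3 : jb (π0 n) ∈ jb.range := ⟨π0 n, rfl⟩
          rw [hker1] at h3
          exact h3
        rw [map_mul, map_mul, hπjn, hfbjb, one_mul]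
      apply hi
      rw [hf]
      conv_rhs => rw [← h1]
      rw [hc, hc, map_mul ξ (j n) (s r), hξj n]
      group
    · intro q1 q2
      obtain ⟨g1, rfl⟩ := hπ q1
      obtain ⟨g2, rfl⟩ := hπ q2
      apply Subtype.ext
      simp only [MulMemClass.coe_mul]
      rw [houtc]
      show c (s (fb (π g1) * fb (π g2))) = c (s (fb (π g1))) * f g1 (c (s (fb (π g2))))
      have e1 : c (s (fb (π g1) * fb (π g2))) = c (g1 * g2) := by
        apply hcw
        rw [map_mul π, map_mul fb]
        exact hs _
      have e2 : c (s (fb (π g1))) = c g1 := hcw _ _ (hs _)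
      have e3 : c (s (fb (π g2))) = c g2 := hcw _ _ (hs _)
      rw [e1, e2, e3]
      apply hi
      rw [map_mul i (c g1) (f g1 (c g2)), hf, hc, hc, hc, map_mul ξ g1 g2]
      group
    · intro g
      rw [hgc g]
      show i (c g) * g = i (c (s (fb (π g)))) * g
      rw [hcw (s (fb (π g))) g (hs _)]
  · -- Part 2: cohomologous iff conjugate by central element
    intro lam1 lam2 _ _
    constructor
    · rintro ⟨z, hz, h⟩
      refine ⟨z⁻¹, fun p => by rw [map_inv, hz p], ?_⟩
      intro q
      obtain ⟨g, rfl⟩ := hπ q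
      apply Subtype.ext
      simp only [MulMemClass.coe_mul, InvMemClass.coe_inv, inv_inv]
      rw [houtc]
      simp only [InvMemClass.coe_inv]
      apply hi
      rw [map_mul i, map_mul i, hf, map_inv i]
      have h2 : i ((lam2 (fb (π g)) : K)) =
          i (z : K) * (i ((lam1 (fb (π g)) : K)) * g) * (i (z : K))⁻¹ * g⁻¹ := by
        rw [← h g]
        group
      rw [h2]
      have hzl : (lam1 (fb (π g)) : K) * (z : K) = (z : K) * (lam1 (fb (π g)) : K) :=
        Subgroup.mem_center_iff.mp z.2 _
      have hzi : i (z : K) * i ((lam1 (fb (π g)) : K)) =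
          i ((lam1 (fb (π g)) : K)) * i (z : K) := by
        rw [← map_mul, ← map_mul, hzl]
      rw [show i (z : K) * (i ((lam1 (fb (π g)) : K)) * g) * (i (z : K))⁻¹ * g⁻¹
            = (i (z : K) * i ((lam1 (fb (π g)) : K))) * (g * (i (z : K))⁻¹ * g⁻¹) from by
          group, hzi]
      group
    · rintro ⟨z0, hz0, h⟩
      refine ⟨z0⁻¹, fun p => by rw [map_inv, hz0 p], ?_⟩
      intro g
      have hq := h (π g)
      rw [hq]
      simp only [MulMemClass.coe_mul, InvMemClass.coe_inv]
      rw [houtc]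
      rw [map_mul i, map_mul i, hf, map_inv i, inv_inv]
      have hzi : i ((lam1 (fb (π g)) : K)) * (i (z0 : K))⁻¹ =
          (i (z0 : K))⁻¹ * i ((lam1 (fb (π g)) : K)) := by
        rw [← map_inv, ← map_mul, ← map_mul]
        congr 1
        exact Subgroup.mem_center_iff.mp (inv_mem z0.2) _
      rw [show i ((lam1 (fb (π g)) : K)) * ((i (z0 : K))⁻¹ * (g * i (z0 : K) * g⁻¹)) * g
            = (i ((lam1 (fb (π g)) : K)) * (i (z0 : K))⁻¹) * (g * i (z0 : K)) from by
          group, hzi]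
      group
  · -- Part 3
    intro ξ hξj hξπ
    constructor
    · rintro ⟨z, hz, h⟩
      exact ⟨(z : K), h⟩
    · rintro ⟨k, hk⟩
      have hξi : ∀ k' : K, ξ (i k') = i k' := fun k' => hξj (i0 k')
      have hkc : k ∈ Subgroup.center K := by
        rw [Subgroup.mem_center_iff]
        intro k'
        apply hi
        rw [map_mul, map_mul]
        have h1 := hk (i k')
        rw [hξi k'] at h1
        conv_lhs => rw [h1]
        group
      refine ⟨⟨k, hkc⟩, ?_, fun g => hk g⟩
      intro p
      obtain ⟨n, rfl⟩ := hπ0 p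
      apply Subtype.ext
      rw [houtp]
      show f (j n) k = k
      have h1 := hk (j n)
      rw [hξj n] at h1
      have h2 : j n * i k = i k * j n := by
        conv_lhs => rw [h1]
        group
      apply hi
      rw [hf, h2]
      group

end IES
end

section
/- Let (G,i,π) be an extension of K by Q with outer action θ. The group isomorphism Z^1(Q,Z(K)) ≅ Aut(KGQ), λ ↦ (g ↦ i(λ(π(g)))·g), carries B^1(Q,Z(K)) onto 𝒞_G(Z(K)), the group of inner automorphisms of G induced by elements of i(Z(K)) (sending the coboundary ∂z₀ to conjugation by i(z₀)⁻¹), and hence induces a group isomorphism from H^1(Q,Z(K)) onto Out(KGQ;K) := Aut(KGQ)/𝒞_G(Z(K)). -/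
namespace IES

/-- The isomorphism `Z¹(Q,Z(K)) ≃ Aut(KGQ)` carries `B¹(Q,Z(K))`
onto the group of inner automorphisms of `G` induced by elements of `i(Z(K))`
(sending `∂z₀` to conjugation by `i(z₀)⁻¹`), and hence induces a group isomorphism
`H¹(Q,Z(K)) ≃ Out(KGQ;K) = Aut(KGQ)/𝒞_G(Z(K))`. -/
theorem statement4
    {K Q G : Type*} [Group K] [Group Q] [Group G]
    (i : K →* G) (π : G →* Q) (θ : Q →* Out K)
    (hi : Function.Injective i) (hπ : Function.Surjective π)
    (hker : i.range = π.ker)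
    (hθ : ∀ (g : G) (κ : MulAut K),
      (∀ k, i (κ k) = g * i k * g⁻¹) → θ (π g) = toOut K κ) :
    -- each coboundary ∂z₀ is a cocycle sent to conjugation by i(z₀)⁻¹
    (∀ z0 : ↥(Subgroup.center K),
      IsZ1Q θ (fun q => z0⁻¹ * outCenter K (θ q) z0) ∧
      ∀ g : G, i ((z0⁻¹ * outCenter K (θ (π g)) z0 : ↥(Subgroup.center K)) : K) * g =
        (i (z0 : K))⁻¹ * g * i (z0 : K)) ∧
    -- a cocycle is sent to an inner automorphism induced by an element of i(Z(K))
    -- iff it is a coboundary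
    (∀ lam : Q → ↥(Subgroup.center K), IsZ1Q θ lam →
      ((∃ z : ↥(Subgroup.center K),
          ∀ g : G, i (lam (π g) : K) * g = i (z : K) * g * (i (z : K))⁻¹) ↔
       (∃ z0 : ↥(Subgroup.center K),
          ∀ q : Q, lam q = z0⁻¹ * outCenter K (θ q) z0))) ∧
    -- surjectivity of Z¹ onto Aut(KGQ)
    (∀ ξ : MulAut G, (∀ k, ξ (i k) = i k) → (∀ g, π (ξ g) = π g) →
      ∃ lam : Q → ↥(Subgroup.center K), IsZ1Q θ lam ∧
        ∀ g : G, ξ g = i (lam (π g) : K) * g) ∧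
    -- the induced map on quotients H¹(Q,Z(K)) → Aut(KGQ)/𝒞_G(Z(K)) is a bijection:
    -- images agree up to an inner automorphism induced by i(Z(K)) iff the cocycles
    -- are cohomologous
    (∀ lam1 lam2 : Q → ↥(Subgroup.center K), IsZ1Q θ lam1 → IsZ1Q θ lam2 →
      ((∃ z : ↥(Subgroup.center K),
          ∀ g : G, i (lam2 (π g) : K) * g =
            i (z : K) * (i (lam1 (π g) : K) * g) * (i (z : K))⁻¹) ↔
       (∃ z0 : ↥(Subgroup.center K),
          ∀ q : Q, lam2 q = lam1 q * (z0⁻¹ * outCenter K (θ q) z0)))) := by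
  classical
  -- conjugation by g preserves i.range
  have hik : ∀ k : K, π (i k) = 1 := by
    intro k
    have : i k ∈ π.ker := by rw [← hker]; exact ⟨k, rfl⟩
    exact this
  have hconj : ∀ (g : G) (k : K), ∃ k', i k' = g * i k * g⁻¹ := by
    intro g k
    have : g * i k * g⁻¹ ∈ i.range := by
      rw [hker]
      show π (g * i k * g⁻¹) = 1
      simp [hik k]
    exact this
  choose c hc using hconj
  -- the key lemma: the action of θ (π g) on the center is conjugation by g
  have key : ∀ (g : G) (z : ↥(Subgroup.center K)),
      i ((outCenter K (θ (π g)) z : K)) = g * i (z : K) * g⁻¹ := by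
    intro g z
    have hli : ∀ k, c g⁻¹ (c g k) = k := by
      intro k
      apply hi
      rw [hc, hc]
      group
    have hri : ∀ k, c g (c g⁻¹ k) = k := by
      intro k
      apply hi
      rw [hc, hc]
      group
    set κ : MulAut K :=
      { toFun := c g
        invFun := c g⁻¹
        left_inv := hli
        right_inv := hri
        map_mul' := by
          intro a b
          apply hi
          simp only [map_mul, hc]
          group } with hκdef
    have hκ : θ (π g) = toOut K κ := hθ g κ (fun k => hc g k)
    have hout : outCenter K (θ (π g)) = centerAut K κ := by
      rw [hκ]
      rfl
    rw [hout]
    show i (c g (z : K)) = g * i (z : K) * g⁻¹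
    exact hc g (z : K)
  -- section of π
  choose sec hsec using hπ
  have key' : ∀ (q : Q) (z : ↥(Subgroup.center K)),
      i ((outCenter K (θ q) z : K)) = sec q * i (z : K) * (sec q)⁻¹ := by
    intro q z
    have := key (sec q) z
    rwa [hsec] at this
  refine ⟨?_, ?_, ?_, ?_⟩
  · -- (1) coboundaries are cocycles and map to conjugation by i z0⁻¹
    intro z0
    constructor
    · constructor
      · simp
      · intro q1 q2
        dsimp only
        have : outCenter K (θ (q1 * q2)) z0
            = outCenter K (θ q1) (outCenter K (θ q2) z0) := by
          rw [map_mul, map_mul]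
          rfl
        rw [this, map_mul, map_inv]
        group
    · intro g
      have hz : ((z0⁻¹ * outCenter K (θ (π g)) z0 : ↥(Subgroup.center K)) : K)
          = (z0 : K)⁻¹ * ((outCenter K (θ (π g)) z0 : ↥(Subgroup.center K)) : K) := rfl
      rw [hz, map_mul, map_inv, key g z0]
      group
  · -- (2) a cocycle is inner-by-center iff it is a coboundary
    intro lam _hlam
    constructor
    · rintro ⟨z, hz⟩
      refine ⟨z⁻¹, ?_⟩
      intro q
      have h1 := hz (sec q)
      rw [hsec] at h1
      have hval : lam q = z * (outCenter K (θ q) z)⁻¹ := by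
        apply Subtype.ext
        apply hi
        have hco : ((z * (outCenter K (θ q) z)⁻¹ : ↥(Subgroup.center K)) : K)
            = (z : K) * (((outCenter K (θ q) z : ↥(Subgroup.center K)) : K))⁻¹ := rfl
        rw [hco, map_mul, map_inv, key' q z]
        apply mul_right_cancel (b := sec q)
        rw [h1]
        group
      rw [hval]
      simp [map_inv]
    · rintro ⟨z0, hz0⟩
      refine ⟨z0⁻¹, ?_⟩
      intro g
      rw [hz0 (π g)]
      have hco : ((z0⁻¹ * outCenter K (θ (π g)) z0 : ↥(Subgroup.center K)) : K)
          = (z0 : K)⁻¹ * ((outCenter K (θ (π g)) z0 : ↥(Subgroup.center K)) : K) := rfl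
      rw [hco, map_mul, map_inv, key g z0]
      simp only [InvMemClass.coe_inv, map_inv]
      group
  · -- (3) surjectivity onto Aut(KGQ)
    intro ξ hξi hξπ
    have hf : ∀ g : G, ∃ k : K, ξ g = i k * g := by
      intro g
      have : ξ g * g⁻¹ ∈ i.range := by
        rw [hker]
        show π (ξ g * g⁻¹) = 1
        rw [map_mul, map_inv, hξπ]
        group
      obtain ⟨k, hk⟩ := this
      exact ⟨k, by rw [hk]; group⟩
    choose f hfspec using hf
    -- f g is central
    have hcent : ∀ g : G, f g ∈ Subgroup.center K := by
      intro g
      rw [Subgroup.mem_center_iff]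
      intro x
      apply hi
      rw [map_mul, map_mul]
      have hx : i x = g * i (c g⁻¹ x) * g⁻¹ := by
        rw [hc]; group
      have hfix : ξ (i x) = i x := hξi x
      have hxi : ξ (i x) = i (f g) * i x * (i (f g))⁻¹ := by
        rw [hx, map_mul, map_mul, map_inv, hξi (c g⁻¹ x), hfspec g]
        group
      rw [hfix] at hxi
      calc i x * i (f g) = (i (f g) * i x * (i (f g))⁻¹) * i (f g) := by rw [← hxi]
        _ = i (f g) * i x := by group
    -- f depends only on π g
    have heq : ∀ g g' : G, π g = π g' → f g = f g' := by
      intro g g' hgg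
      have : g' * g⁻¹ ∈ i.range := by
        rw [hker]
        show π (g' * g⁻¹) = 1
        rw [map_mul, map_inv, hgg]
        group
      obtain ⟨m, hm⟩ := this
      have hg' : g' = i m * g := by rw [hm]; group
      have h1 : ξ g' = i m * (i (f g) * g) := by
        rw [hg', map_mul, hξi m, hfspec g]
      have h2 : ξ g' = i (f g') * (i m * g) := by
        rw [hfspec g', hg']
      have h3 : i (m * f g) = i (f g' * m) := by
        apply mul_right_cancel (b := g)
        rw [map_mul, map_mul]
        calc i m * i (f g) * g = i m * (i (f g) * g) := by group
          _ = i (f g') * (i m * g) := by rw [← h1, h2]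
          _ = i (f g') * i m * g := by group
      have h4 : m * f g = f g' * m := hi h3
      have h5 : f g * m = f g' * m := by
        rw [← h4]
        have := hcent g
        rw [Subgroup.mem_center_iff] at this
        exact (this m).symm
      exact mul_right_cancel h5
    set lam : Q → ↥(Subgroup.center K) := fun q => ⟨f (sec q), hcent (sec q)⟩ with hlamdef
    have hlamπ : ∀ g : G, (lam (π g) : K) = f g := by
      intro g
      exact heq (sec (π g)) g (by rw [hsec])
    have hf1 : f 1 = 1 := by
      apply hi
      have : ξ 1 = i (f 1) * 1 := hfspec 1
      rw [map_one, mul_one] at this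
      rw [map_one, ← this]
    refine ⟨lam, ⟨?_, ?_⟩, ?_⟩
    · apply Subtype.ext
      show f (sec 1) = 1
      rw [heq (sec 1) 1 (by rw [hsec, map_one]), hf1]
    · intro q1 q2
      apply Subtype.ext
      have hπ12 : π (sec q1 * sec q2) = q1 * q2 := by rw [map_mul, hsec, hsec]
      have hl : (lam (q1 * q2) : K) = f (sec q1 * sec q2) := by
        have := hlamπ (sec q1 * sec q2)
        rwa [hπ12] at this
      show (lam (q1 * q2) : K) = f (sec q1) * ((outCenter K (θ q1) (lam q2) : ↥(Subgroup.center K)) : K)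
      rw [hl]
      apply hi
      rw [map_mul, key' q1 (lam q2)]
      apply mul_right_cancel (b := sec q1 * sec q2)
      have hL : i (f (sec q1 * sec q2)) * (sec q1 * sec q2) = ξ (sec q1 * sec q2) :=
        (hfspec _).symm
      have hR : ξ (sec q1 * sec q2) = i (f (sec q1)) * sec q1 * (i ((lam q2 : K)) * sec q2) := by
        rw [map_mul, hfspec, hfspec]
      rw [hL, hR]
      group
    · intro g
      rw [hlamπ g]
      exact hfspec g
  · -- (4) injectivity on cohomology classes
    intro lam1 lam2 _h1 _h2
    constructor
    · rintro ⟨z, hz⟩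
      refine ⟨z⁻¹, ?_⟩
      intro q
      have h1 := hz (sec q)
      rw [hsec] at h1
      have hval : lam2 q = z * lam1 q * (outCenter K (θ q) z)⁻¹ := by
        apply Subtype.ext
        apply hi
        have hco : ((z * lam1 q * (outCenter K (θ q) z)⁻¹ : ↥(Subgroup.center K)) : K)
            = (z : K) * (lam1 q : K) * (((outCenter K (θ q) z : ↥(Subgroup.center K)) : K))⁻¹ := rfl
        rw [hco, map_mul, map_mul, map_inv, key' q z]
        apply mul_right_cancel (b := sec q)
        rw [h1]
        group
      have hcomm : z * lam1 q = lam1 q * z :=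
        Subtype.ext ((Subgroup.mem_center_iff.mp z.2 (lam1 q : K)).symm)
      rw [hval, hcomm, mul_assoc]
      simp [map_inv]
    · rintro ⟨z0, hz0⟩
      refine ⟨z0⁻¹, ?_⟩
      intro g
      have hcomm' : lam1 (π g) * z0⁻¹ = z0⁻¹ * lam1 (π g) :=
        Subtype.ext (Subgroup.mem_center_iff.mp (z0⁻¹).2 (lam1 (π g) : K))
      have hlc : lam1 (π g) * (z0⁻¹ * outCenter K (θ (π g)) z0)
          = z0⁻¹ * (lam1 (π g) * outCenter K (θ (π g)) z0) := by
        rw [← mul_assoc, ← mul_assoc, hcomm']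
      rw [hz0 (π g), hlc]
      have hco : ((z0⁻¹ * (lam1 (π g) * outCenter K (θ (π g)) z0) : ↥(Subgroup.center K)) : K)
          = (z0 : K)⁻¹ * ((lam1 (π g) : K) * ((outCenter K (θ (π g)) z0 : ↥(Subgroup.center K)) : K)) := rfl
      rw [hco, map_mul, map_mul, map_inv, key g z0]
      simp only [InvMemClass.coe_inv, map_inv]
      group

end IES
end

section
/- Let (G,j,π) be an iterated extension of (KNP) by (PQR) whose Q-main extension (G,i,π) (with i := j∘i₀) has outer action θ. An automorphism ξ ∈ Aut(KNGQR) is an inner automorphism of G induced by an element of i(Z(K)) if and only if it is an inner automorphism of G induced by an element of i(Z(K)^P). Equivalently, the homomorphism Aut(KNGQR)/𝒞_G(Z(K)^P) → Aut(KGQ)/𝒞_G(Z(K)) induced by the inclusion Aut(KNGQR) ⊆ Aut(KGQ) is injective. -/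
namespace IES

/-- An automorphism of the iterated extension `(KNGQR)` is an inner
automorphism of `G` induced by an element of `i(Z(K))` iff it is an inner automorphism
induced by an element of `i(Z(K)^P)`; equivalently, the induced map
`Aut(KNGQR)/𝒞_G(Z(K)^P) → Aut(KGQ)/𝒞_G(Z(K))` is injective. -/
theorem statement5
    {K P Q R N G : Type*} [Group K] [Group P] [Group Q] [Group R] [Group N] [Group G]
    (i0 : K →* N) (π0 : N →* P) (jb : P →* Q) (fb : Q →* R)
    (j : N →* G) (π : G →* Q) (θ : Q →* Out K)
    (hi0 : Function.Injective i0) (hπ0 : Function.Surjective π0)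
    (hker0 : i0.range = π0.ker)
    (hjb : Function.Injective jb) (hfb : Function.Surjective fb)
    (hker1 : jb.range = fb.ker)
    (hj : Function.Injective j) (hπ : Function.Surjective π)
    (hcomm : π.comp j = jb.comp π0)
    (hkerφ : j.range = (fb.comp π).ker)
    (hkerπ : (j.comp i0).range = π.ker)
    (hθ : ∀ (g : G) (κ : MulAut K),
      (∀ k, (j.comp i0) (κ k) = g * (j.comp i0) k * g⁻¹) → θ (π g) = toOut K κ) :
    ∀ ξ : MulAut G, (∀ n, ξ (j n) = j n) → (∀ g, π (ξ g) = π g) →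
      ((∃ z : ↥(Subgroup.center K),
          ∀ g : G, ξ g = (j.comp i0) (z : K) * g * ((j.comp i0) (z : K))⁻¹) ↔
       (∃ z : ↥(Subgroup.center K), (∀ p : P, outCenter K (θ (jb p)) z = z) ∧
          ∀ g : G, ξ g = (j.comp i0) (z : K) * g * ((j.comp i0) (z : K))⁻¹)) := by
  intro ξ hξN hξπ
  constructor
  · rintro ⟨z, hz⟩
    refine ⟨z, ?_, hz⟩
    intro p
    obtain ⟨n, rfl⟩ := hπ0 p
    -- i z commutes with j n
    have hco : (j.comp i0) (z : K) * j n = j n * (j.comp i0) (z : K) := by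
      have h1 := hz (j n)
      rw [hξN n] at h1
      have : j n * (j.comp i0) (z : K) = (j.comp i0) (z : K) * j n := by
        conv_lhs => rw [h1]
        group
      exact this.symm
    -- every conjugate of i0 K by an element of N lands in i0 K
    have hmem : ∀ (m : N) (k : K), m * i0 k * m⁻¹ ∈ i0.range := by
      intro m k
      rw [hker0, MonoidHom.mem_ker, map_mul, map_mul, map_inv]
      have : π0 (i0 k) = 1 := by
        rw [← MonoidHom.mem_ker, ← hker0]; exact ⟨k, rfl⟩
      rw [this, mul_one, mul_inv_cancel]
    set f : N → K → K := fun m k => (hmem m k).choose with hf_def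
    have hf : ∀ (m : N) (k : K), i0 (f m k) = m * i0 k * m⁻¹ :=
      fun m k => (hmem m k).choose_spec
    have hleft : ∀ (m : N) (k : K), f m⁻¹ (f m k) = k := by
      intro m k
      apply hi0
      rw [hf, hf]
      group
    have hright : ∀ (m : N) (k : K), f m (f m⁻¹ k) = k := by
      intro m k
      apply hi0
      rw [hf, hf]
      group
    have hmul : ∀ (m : N) (a b : K), f m (a * b) = f m a * f m b := by
      intro m a b
      apply hi0
      rw [map_mul, hf, hf, hf, map_mul]
      group
    set κ : MulAut K :=
      { toFun := f n
        invFun := f n⁻¹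
        left_inv := hleft n
        right_inv := hright n
        map_mul' := hmul n } with hκ_def
    have hκ : ∀ k, (j.comp i0) (κ k) = j n * (j.comp i0) k * (j n)⁻¹ := by
      intro k
      show j (i0 (f n k)) = _
      rw [hf, map_mul, map_mul, map_inv]
      rfl
    have hθn := hθ (j n) κ hκ
    have hπjn : π (j n) = jb (π0 n) := by
      exact DFunLike.congr_fun hcomm n
    rw [hπjn] at hθn
    rw [hθn]
    have hlift : outCenter K (toOut K κ) = centerAut K κ := rfl
    rw [hlift]
    -- κ z = z    since  n * i0 z * n⁻¹ = i0 z
    have hfix : κ (z : K) = (z : K) := by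
      apply hi0
      show i0 (f n (z : K)) = i0 (z : K)
      rw [hf]
      apply hj
      rw [map_mul, map_mul, map_inv]
      have : j (i0 (z : K)) = (j.comp i0) (z : K) := rfl
      rw [this, ← hco]
      group
    exact Subtype.ext hfix
  · rintro ⟨z, _, hz⟩
    exact ⟨z, hz⟩

end IES
end

section
/- Suppose (KNP,PQR,Θ) is an iterated extension problem. Then the canonical group isomorphism Z^1(P,Z(K)) ≅ Aut(KNP), λ ↦ (n ↦ i₀(λ(π₀(n)))·n), is Q-equivariant: for any q ∈ Q and any lift Σ(q) ∈ Aut_K(N) of Θ(q) ∈ Out(N;K), if λ ∈ Z^1(P,Z(K)) corresponds to η ∈ Aut(KNP), then the cocycle q·λ corresponds to Σ(q)∘η∘Σ(q)⁻¹, which again lies in Aut(KNP) and is independent of the choice of the lift Σ(q). -/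
namespace IES

lemma exists_kappa {K N : Type*} [Group K] [Group N] (i0 : K →* N)
    (hi0 : Function.Injective i0) (Sa : ↥(autK i0)) :
    ∃ κ : MulAut K, ∀ k, i0 (κ k) = (Sa : MulAut N) (i0 k) := by
  have hmem : (Sa : MulAut N) ∈ autK i0 := Sa.2
  have hmemInv : (Sa : MulAut N)⁻¹ ∈ autK i0 := (autK i0).inv_mem Sa.2
  choose g hg using fun k => (hmem (i0 k)).mpr ⟨k, rfl⟩
  choose g' hg' using fun k => (hmemInv (i0 k)).mpr ⟨k, rfl⟩
  refine ⟨MulEquiv.mk' (Equiv.mk g g' ?_ ?_) ?_, fun k => hg k⟩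
  · intro k; apply hi0; rw [hg', hg]; simp
  · intro k; apply hi0; rw [hg, hg']; simp
  · intro a b; apply hi0; simp only [Equiv.coe_fn_mk, map_mul, hg]


/-- For an iterated extension problem `(KNP,PQR,Θ)`, the canonical
isomorphism `Z¹(P,Z(K)) ≃ Aut(KNP)`, `λ ↦ (n ↦ i₀(λ(π₀ n))·n)`, is `Q`-equivariant:
if `λ` corresponds to `η`, then for any `q ∈ Q` and any lift `Σ` of `Θ(q)`, the
automorphism `Σ∘η∘Σ⁻¹` lies again in `Aut(KNP)`, is independent of the choice of the
lift, and corresponds to the cocycle `q·λ`. -/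
theorem statement7
    {K P Q R N : Type*} [Group K] [Group P] [Group Q] [Group R] [Group N]
    (i0 : K →* N) (π0 : N →* P) (jb : P →* Q) (fb : Q →* R) (θ : Q →* Out K)
    (hi0 : Function.Injective i0) (hπ0 : Function.Surjective π0)
    (hker0 : i0.range = π0.ker)
    (hjb : Function.Injective jb) (hfb : Function.Surjective fb)
    (hker1 : jb.range = fb.ker)
    -- the extension (KNP) has outer action θ∘j̄
    (hθN : ∀ (n : N) (κ : MulAut K),
      (∀ k, i0 (κ k) = n * i0 k * n⁻¹) → θ (jb (π0 n)) = toOut K κ)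
    -- the mod-K outer action Θ_P of (KNP)
    (ΘP : P →* OutNK i0)
    (hΘP : ∀ (n : N) (ν : ↥(autK i0)),
      (∀ m : N, (ν : MulAut N) m = n * m * n⁻¹) → ΘP (π0 n) = mkNK i0 ν)
    -- Θ is a (θ,𝒞_P^Q)-prolongation of Θ_P
    (Θ : Q →* OutNK i0)
    (hΘjb : ∀ p : P, Θ (jb p) = ΘP p)
    (hΘK : ∀ (q : Q) (ν : ↥(autK i0)) (κ : MulAut K), mkNK i0 ν = Θ q →
      (∀ k, i0 (κ k) = (ν : MulAut N) (i0 k)) → θ q = toOut K κ)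
    (hΘconjP : ∀ (q : Q) (ν : ↥(autK i0)), mkNK i0 ν = Θ q →
      ∀ n : N, jb (π0 ((ν : MulAut N) n)) = q * jb (π0 n) * q⁻¹)
    -- a 1-cocycle λ and the corresponding automorphism η ∈ Aut(KNP)
    (lam : P → ↥(Subgroup.center K)) (hlam : IsZ1P θ jb lam)
    (η : MulAut N) (hη : ∀ n : N, η n = i0 (lam (π0 n) : K) * n) :
    ∀ (q : Q) (Sa : ↥(autK i0)), mkNK i0 Sa = Θ q →
      -- Σ∘η∘Σ⁻¹ again lies in Aut(KNP)
      (∀ k : K, ((Sa : MulAut N) * η * (Sa : MulAut N)⁻¹) (i0 k) = i0 k) ∧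
      (∀ n : N, π0 (((Sa : MulAut N) * η * (Sa : MulAut N)⁻¹) n) = π0 n) ∧
      -- the transformed cocycle q·λ is again a 1-cocycle
      (∀ lam' : P → ↥(Subgroup.center K),
        (∀ p p' : P, jb p' = q⁻¹ * jb p * q →
          lam' p = outCenter K (θ q) (lam p')) → IsZ1P θ jb lam') ∧
      -- Σ∘η∘Σ⁻¹ corresponds to q·λ
      (∀ (n : N) (p' : P), jb p' = q⁻¹ * jb (π0 n) * q →
        ((Sa : MulAut N) * η * (Sa : MulAut N)⁻¹) n =
          i0 (outCenter K (θ q) (lam p') : K) * n) ∧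
      -- independence of the choice of the lift of Θ(q)
      (∀ Sb : ↥(autK i0), mkNK i0 Sb = Θ q →
        (Sa : MulAut N) * η * (Sa : MulAut N)⁻¹ =
          (Sb : MulAut N) * η * (Sb : MulAut N)⁻¹) := by
  intro q Sa hSa
  -- basic facts
  have hπi0 : ∀ k : K, π0 (i0 k) = 1 := by
    intro k
    have : i0 k ∈ π0.ker := by rw [← hker0]; exact ⟨k, rfl⟩
    exact this
  have hηfix : ∀ k : K, η (i0 k) = i0 k := by
    intro k
    rw [hη, hπi0, hlam.1]
    simp
  have hπη : ∀ m : N, π0 (η m) = π0 m := by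
    intro m
    rw [hη, map_mul, hπi0, one_mul]
  obtain ⟨κ, hκ⟩ := exists_kappa i0 hi0 Sa
  have hθq : θ q = toOut K κ := hΘK q Sa κ hSa hκ
  have hαout : ∀ z : ↥(Subgroup.center K), (outCenter K (θ q) z : K) = κ (z : K) := by
    intro z; rw [hθq]; rfl
  have hconjInv : ∀ n : N, jb (π0 ((Sa : MulAut N)⁻¹ n)) = q⁻¹ * jb (π0 n) * q := by
    intro n
    have h := hΘconjP q Sa hSa ((Sa : MulAut N)⁻¹ n)
    rw [MulAut.apply_inv_self] at h
    rw [h]; group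
  have hpex : ∀ p : P, ∃ p' : P, jb p' = q⁻¹ * jb p * q := by
    intro p
    have hp : fb (jb p) = 1 := by
      have : jb p ∈ fb.ker := by rw [← hker1]; exact ⟨p, rfl⟩
      exact this
    have : q⁻¹ * jb p * q ∈ jb.range := by
      rw [hker1]
      show fb (q⁻¹ * jb p * q) = 1
      rw [map_mul, map_mul, hp]
      simp
    exact this
  have hcomm : ∀ (p p' : P), jb p' = q⁻¹ * jb p * q → ∀ x : ↥(Subgroup.center K),
      outCenter K (θ q) (outCenter K (θ (jb p')) x) =
        outCenter K (θ (jb p)) (outCenter K (θ q) x) := by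
    intro p p' hp' x
    have h1 : q * jb p' = jb p * q := by rw [hp']; group
    have h2 := congrArg (fun u => outCenter K (θ u) x) h1
    simpa [map_mul, MulAut.mul_apply] using h2
  refine ⟨?_, ?_, ?_, ?_, ?_⟩
  · -- fixes i0 K
    intro k
    have hmemInv : (Sa : MulAut N)⁻¹ ∈ autK i0 := (autK i0).inv_mem Sa.2
    obtain ⟨k', hk'⟩ := (hmemInv (i0 k)).mpr ⟨k, rfl⟩
    simp only [MulAut.mul_apply]
    rw [← hk', hηfix, hk', MulAut.apply_inv_self]
  · -- commutes with π0
    intro n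
    apply hjb
    simp only [MulAut.mul_apply]
    rw [hΘconjP q Sa hSa (η ((Sa : MulAut N)⁻¹ n)), hπη, hconjInv]
    group
  · -- q·λ is a cocycle
    intro lam' hlam'
    constructor
    · have h1 : jb (1 : P) = q⁻¹ * jb 1 * q := by simp
      rw [hlam' 1 1 h1, hlam.1, map_one]
    · intro p1 p2
      obtain ⟨p1', hp1'⟩ := hpex p1
      obtain ⟨p2', hp2'⟩ := hpex p2
      have hp12 : jb (p1' * p2') = q⁻¹ * jb (p1 * p2) * q := by
        rw [map_mul, map_mul, hp1', hp2']; group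
      rw [hlam' _ _ hp12, hlam' _ _ hp1', hlam' _ _ hp2', hlam.2 p1' p2', map_mul]
      congr 1
      exact hcomm p1 p1' hp1' (lam p2')
  · -- corresponds to q·λ
    intro n p' hp'
    have hm : π0 ((Sa : MulAut N)⁻¹ n) = p' := by
      apply hjb; rw [hconjInv, hp']
    simp only [MulAut.mul_apply]
    rw [hη, hm, map_mul, MulAut.apply_inv_self, ← hκ, hαout]
  · -- independence of the lift
    intro Sb hSb
    have heq : mkNK i0 Sa = mkNK i0 Sb := hSa.trans hSb.symm
    have heq' : QuotientGroup.mk' (cInn i0) Sa = QuotientGroup.mk' (cInn i0) Sb := heq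
    obtain ⟨c, hc, hcs⟩ := (QuotientGroup.mk'_eq_mk' (cInn i0)).mp heq'
    obtain ⟨k0, hk0⟩ := hc
    have hSb' : (Sb : MulAut N) = (Sa : MulAut N) * MulAut.conj (i0 k0) := by
      rw [← hcs, Subgroup.coe_mul, hk0]
    have hcη : MulAut.conj (i0 k0) * η * (MulAut.conj (i0 k0))⁻¹ = η := by
      ext m
      simp only [MulAut.mul_apply]
      have hinv : (MulAut.conj (i0 k0))⁻¹ m = (i0 k0)⁻¹ * m * i0 k0 := by
        rw [← map_inv MulAut.conj]
        simp [MulAut.conj_apply, mul_assoc]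
      rw [hinv, hη, hη]
      have hπ : π0 ((i0 k0)⁻¹ * m * i0 k0) = π0 m := by
        have h1 : π0 (i0 k0) = 1 := hπi0 k0
        rw [map_mul, map_mul, map_inv, h1]
        simp
      rw [hπ]
      have hcen : i0 k0 * i0 ((lam (π0 m) : K)) = i0 ((lam (π0 m) : K)) * i0 k0 := by
        rw [← map_mul, ← map_mul]
        congr 1
        exact Subgroup.mem_center_iff.mp (lam (π0 m)).2 k0
      show i0 k0 * (i0 ((lam (π0 m) : K)) * ((i0 k0)⁻¹ * m * i0 k0)) * (i0 k0)⁻¹ =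
        i0 ((lam (π0 m) : K)) * m
      have hstep : i0 k0 * (i0 ((lam (π0 m) : K)) * ((i0 k0)⁻¹ * m * i0 k0)) * (i0 k0)⁻¹ =
          (i0 k0 * i0 ((lam (π0 m) : K))) * (i0 k0)⁻¹ * m := by group
      rw [hstep, hcen]
      group
    rw [hSb']
    have hstep2 : ((Sa : MulAut N) * MulAut.conj (i0 k0)) * η *
        ((Sa : MulAut N) * MulAut.conj (i0 k0))⁻¹ =
        (Sa : MulAut N) * (MulAut.conj (i0 k0) * η * (MulAut.conj (i0 k0))⁻¹) *
          (Sa : MulAut N)⁻¹ := by group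
    rw [hstep2, hcη]

end IES
end

section
/- Suppose (KNP,PQR,Θ) is an iterated extension problem. Then the canonical isomorphism H^1(P,Z(K)) ≅ Out(KNP;K) (induced by λ ↦ (n ↦ i₀(λ(π₀(n)))·n), where Out(KNP;K) is the image of Aut(KNP) in Out(N;K)) restricts to a group isomorphism from the R-fixed subgroup H^1(P,Z(K))^R onto Out_Θ(KNP;K), the subgroup of Θ-compatible classes. -/
namespace IES

section Helpers

variable {K P Q R N : Type*} [Group K] [Group P] [Group Q] [Group R] [Group N]

lemma exists_pullAut (i0 : K →* N) (hi0 : Function.Injective i0) (e : MulAut N)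
    (he : ∀ k, ∃ k', i0 k' = e (i0 k)) (he' : ∀ k, ∃ k', i0 k' = e⁻¹ (i0 k)) :
    ∃ κ : MulAut K, ∀ k, i0 (κ k) = e (i0 k) := by
  choose f hf using he
  choose g hg using he'
  have hgf : ∀ k, g (f k) = k := by
    intro k; apply hi0; rw [hg, hf, MulAut.inv_apply_self]
  have hfg : ∀ k, f (g k) = k := by
    intro k; apply hi0; rw [hf, hg, MulAut.apply_inv_self]
  refine ⟨⟨⟨f, g, hgf, hfg⟩, ?_⟩, fun k => hf k⟩
  intro a b
  apply hi0
  simp only [map_mul, hf]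

lemma pi0I (i0 : K →* N) (π0 : N →* P) (hker0 : i0.range = π0.ker) (k : K) :
    π0 (i0 k) = 1 := by
  have : i0 k ∈ π0.ker := hker0 ▸ ⟨k, rfl⟩
  exact this

lemma pi0mul (i0 : K →* N) (π0 : N →* P) (hker0 : i0.range = π0.ker) (k : K) (n : N) :
    π0 (i0 k * n) = π0 n := by
  rw [map_mul, pi0I i0 π0 hker0, one_mul]

lemma i0_center_comm (i0 : K →* N) (z : ↥(Subgroup.center K)) (k : K) :
    i0 (z : K) * i0 k = i0 k * i0 (z : K) := by
  rw [← map_mul, ← map_mul, (Subgroup.mem_center_iff.mp z.2 k)]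

end Helpers
section Helpers2

variable {K P Q R N : Type*} [Group K] [Group P] [Group Q] [Group R] [Group N]

lemma outCenter_toOut (K : Type*) [Group K] (κ : MulAut K) :
    outCenter K (toOut K κ) = centerAut K κ := rfl

lemma lemB (i0 : K →* N) (π0 : N →* P) (jb : P →* Q) (θ : Q →* Out K)
    (hi0 : Function.Injective i0) (hker0 : i0.range = π0.ker)
    (hθN : ∀ (n : N) (κ : MulAut K),
      (∀ k, i0 (κ k) = n * i0 k * n⁻¹) → θ (jb (π0 n)) = toOut K κ)
    (n : N) (z : ↥(Subgroup.center K)) :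
    i0 ((outCenter K (θ (jb (π0 n))) z : ↥(Subgroup.center K)) : K) = n * (i0 (z : K)) * n⁻¹ := by
  have hmem : ∀ m : N, π0 m = 1 → ∃ k', i0 k' = m := by
    intro m hm
    have : m ∈ π0.ker := hm
    rw [← hker0] at this
    exact this
  obtain ⟨κ, hκ⟩ := exists_pullAut i0 hi0 (MulAut.conj n)
    (fun k => hmem _ (by simp [MulAut.conj_apply, pi0I i0 π0 hker0]))
    (fun k => hmem _ (by simp [← map_inv, MulAut.conj_apply, pi0I i0 π0 hker0, map_inv, inv_mul_cancel]))
  have hθ : θ (jb (π0 n)) = toOut K κ := hθN n κ (fun k => by rw [hκ]; rfl)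
  rw [hθ, outCenter_toOut]
  show i0 (κ (z : K)) = _
  rw [hκ]
  rfl

lemma lemC (i0 : K →* N) (θ : Q →* Out K)
    (hi0 : Function.Injective i0)
    (Θ : Q →* OutNK i0)
    (hΘK : ∀ (q : Q) (ν : ↥(autK i0)) (κ : MulAut K), mkNK i0 ν = Θ q →
      (∀ k, i0 (κ k) = (ν : MulAut N) (i0 k)) → θ q = toOut K κ)
    (q : Q) (ν : ↥(autK i0)) (hν : mkNK i0 ν = Θ q) (z : ↥(Subgroup.center K)) :
    i0 ((outCenter K (θ q) z : ↥(Subgroup.center K)) : K) = (ν : MulAut N) (i0 (z : K)) := by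
  obtain ⟨κ, hκ⟩ := exists_pullAut i0 hi0 (ν : MulAut N)
    (fun k => by
      obtain ⟨k', hk'⟩ := (ν.2 (i0 k)).mpr ⟨k, rfl⟩
      exact ⟨k', hk'⟩)
    (fun k => by
      obtain ⟨k', hk'⟩ := ((ν⁻¹).2 (i0 k)).mpr ⟨k, rfl⟩
      exact ⟨k', hk'⟩)
  have hθ : θ q = toOut K κ := hΘK q ν κ hν hκ
  rw [hθ, outCenter_toOut]
  show i0 (κ (z : K)) = _
  rw [hκ]

end Helpers2
section Helpers3

variable {K P Q R N : Type*} [Group K] [Group P] [Group Q] [Group R] [Group N]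

lemma comm_mem_iff {G : Type*} [Group G] (S : Subgroup G) [hNml : S.Normal] (a b : G) :
    QuotientGroup.mk' S (a * b) = QuotientGroup.mk' S (b * a) ↔ a * b * a⁻¹ * b⁻¹ ∈ S := by
  have base : ∀ x y : G, QuotientGroup.mk' S x = QuotientGroup.mk' S y ↔ x⁻¹ * y ∈ S :=
    fun x y => QuotientGroup.eq
  rw [base]
  constructor
  · intro h1
    have h2 := hNml.conj_mem _ h1 (a * b)
    have h3 := S.inv_mem h2
    have he : a * b * a⁻¹ * b⁻¹ = (a * b * ((a * b)⁻¹ * (b * a)) * (a * b)⁻¹)⁻¹ := by group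
    rw [he]; exact h3
  · intro h
    have h1 := S.inv_mem h
    have h2 := hNml.conj_mem _ h1 (a * b)⁻¹
    have he : (a * b)⁻¹ * (b * a) = (a * b)⁻¹ * (a * b * a⁻¹ * b⁻¹)⁻¹ * ((a * b)⁻¹)⁻¹ := by
      group
    rw [he]; exact h2

lemma keyChar (i0 : K →* N) (π0 : N →* P) (jb : P →* Q) (θ : Q →* Out K)
    (hi0 : Function.Injective i0) (hπ0 : Function.Surjective π0)
    (hker0 : i0.range = π0.ker)
    (hθN : ∀ (n : N) (κ : MulAut K),
      (∀ k, i0 (κ k) = n * i0 k * n⁻¹) → θ (jb (π0 n)) = toOut K κ)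
    (w : P → ↥(Subgroup.center K)) (hw1 : w 1 = 1) :
    (∃ k : K, ∀ n : N, i0 ((w (π0 n) : ↥(Subgroup.center K)) : K) * n = i0 k * n * (i0 k)⁻¹) ↔
    (∃ z0 : ↥(Subgroup.center K), ∀ p : P,
      w p = z0 * (outCenter K (θ (jb p)) z0)⁻¹) := by
  constructor
  · rintro ⟨k, hk⟩
    have hkc : k ∈ Subgroup.center K := by
      rw [Subgroup.mem_center_iff]
      intro g
      have h1 := hk (i0 g)
      rw [pi0I i0 π0 hker0, hw1] at h1
      simp only [OneMemClass.coe_one, map_one, one_mul] at h1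
      rw [eq_mul_inv_iff_mul_eq] at h1
      apply hi0
      rw [map_mul, map_mul]
      exact h1
    refine ⟨⟨k, hkc⟩, fun p => ?_⟩
    obtain ⟨n, rfl⟩ := hπ0 p
    have h3 := lemB i0 π0 jb θ hi0 hker0 hθN n ⟨k, hkc⟩
    have h1' : i0 ((w (π0 n) : ↥(Subgroup.center K)) : K) = i0 k * n * (i0 k)⁻¹ * n⁻¹ :=
      eq_mul_inv_of_mul_eq (hk n)
    apply Subtype.ext
    apply hi0
    have hck : ((⟨k, hkc⟩ : ↥(Subgroup.center K)) : K) = k := rfl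
    rw [Subgroup.coe_mul, InvMemClass.coe_inv, map_mul, map_inv, h3, h1', hck]
    group
  · rintro ⟨z0, hz0⟩
    refine ⟨(z0 : K), fun n => ?_⟩
    have h3 := lemB i0 π0 jb θ hi0 hker0 hθN n z0
    rw [hz0 (π0 n), Subgroup.coe_mul, InvMemClass.coe_inv, map_mul, map_inv, h3]
    group

end Helpers3
section Helpers4

variable {K P Q R N : Type*} [Group K] [Group P] [Group Q] [Group R] [Group N]

/-- Uniqueness: an element of `autK i0` is determined by its pointwise action. -/
lemma autK_ext {i0 : K →* N} {η1 η2 : ↥(autK i0)}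
    (h : ∀ n : N, (η1 : MulAut N) n = (η2 : MulAut N) n) : η1 = η2 := by
  apply Subtype.ext
  ext n
  exact h n

lemma inv_formula (i0 : K →* N) (π0 : N →* P) (hker0 : i0.range = π0.ker)
    (lam : P → ↥(Subgroup.center K)) (η : MulAut N)
    (h : ∀ n : N, η n = i0 ((lam (π0 n) : ↥(Subgroup.center K)) : K) * n) (n : N) :
    η⁻¹ n = (i0 ((lam (π0 n) : ↥(Subgroup.center K)) : K))⁻¹ * n := by
  have : η ((i0 ((lam (π0 n) : ↥(Subgroup.center K)) : K))⁻¹ * n) = n := by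
    rw [h, ← map_inv, pi0mul i0 π0 hker0, map_inv]
    rw [mul_inv_cancel_left]
  calc η⁻¹ n = η⁻¹ (η ((i0 ((lam (π0 n) : ↥(Subgroup.center K)) : K))⁻¹ * n)) := by rw [this]
    _ = _ := by rw [← MulAut.mul_apply, inv_mul_cancel, MulAut.one_apply]

lemma buildAut (i0 : K →* N) (π0 : N →* P) (jb : P →* Q) (θ : Q →* Out K)
    (hi0 : Function.Injective i0) (hker0 : i0.range = π0.ker)
    (hθN : ∀ (n : N) (κ : MulAut K),
      (∀ k, i0 (κ k) = n * i0 k * n⁻¹) → θ (jb (π0 n)) = toOut K κ)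
    (lam : P → ↥(Subgroup.center K)) (hlam : IsZ1P θ jb lam) :
    ∃ ηa : ↥(autK i0), ∀ n : N, (ηa : MulAut N) n = i0 ((lam (π0 n) : ↥(Subgroup.center K)) : K) * n := by
  set f : N → N := fun n => i0 ((lam (π0 n) : ↥(Subgroup.center K)) : K) * n with hf
  set g : N → N := fun n => (i0 ((lam (π0 n) : ↥(Subgroup.center K)) : K))⁻¹ * n with hg
  have hgf : ∀ n, g (f n) = n := by
    intro n
    simp only [hf, hg, pi0mul i0 π0 hker0]
    rw [inv_mul_cancel_left]
  have hfg : ∀ n, f (g n) = n := by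
    intro n
    simp only [hf, hg, ← map_inv, pi0mul i0 π0 hker0]
    rw [map_inv, mul_inv_cancel_left]
  have hmul : ∀ m n : N, f (m * n) = f m * f n := by
    intro m n
    simp only [hf, map_mul]
    rw [hlam.2 (π0 m) (π0 n)]
    have h3 := lemB i0 π0 jb θ hi0 hker0 hθN m (lam (π0 n))
    rw [Subgroup.coe_mul, map_mul, h3]
    group
  set η : MulAut N := ⟨⟨f, g, hgf, hfg⟩, hmul⟩ with hη
  have hη1 : ∀ n, η n = f n := fun _ => rfl
  have hmem : η ∈ autK i0 := by
    intro n
    constructor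
    · rintro ⟨k, hk⟩
      have : n = (i0 ((lam (π0 n) : ↥(Subgroup.center K)) : K))⁻¹ * i0 k := by
        rw [hk]; show n = _ * (_ * n); rw [inv_mul_cancel_left]
      rw [this]
      exact Subgroup.mul_mem _ (Subgroup.inv_mem _ ⟨_, rfl⟩) ⟨k, rfl⟩
    · rintro ⟨k, rfl⟩
      show f (i0 k) ∈ _
      simp only [hf, pi0I i0 π0 hker0, hlam.1, OneMemClass.coe_one, map_one, one_mul]
      exact ⟨k, rfl⟩
  exact ⟨⟨η, hmem⟩, fun n => rfl⟩

end Helpers4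
section Helpers5

variable {K P Q R N : Type*} [Group K] [Group P] [Group Q] [Group R] [Group N]

lemma part2 (i0 : K →* N) (π0 : N →* P) (jb : P →* Q) (θ : Q →* Out K)
    (hi0 : Function.Injective i0) (hπ0 : Function.Surjective π0)
    (hker0 : i0.range = π0.ker) (hjb : Function.Injective jb)
    (hθN : ∀ (n : N) (κ : MulAut K),
      (∀ k, i0 (κ k) = n * i0 k * n⁻¹) → θ (jb (π0 n)) = toOut K κ)
    (Θ : Q →* OutNK i0)
    (hΘK : ∀ (q : Q) (ν : ↥(autK i0)) (κ : MulAut K), mkNK i0 ν = Θ q →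
      (∀ k, i0 (κ k) = (ν : MulAut N) (i0 k)) → θ q = toOut K κ)
    (hΘconjP : ∀ (q : Q) (ν : ↥(autK i0)), mkNK i0 ν = Θ q →
      ∀ n : N, jb (π0 ((ν : MulAut N) n)) = q * jb (π0 n) * q⁻¹)
    (lam : P → ↥(Subgroup.center K)) (ηa : ↥(autK i0)) (hlam : IsZ1P θ jb lam)
    (hηa : ∀ n : N, (ηa : MulAut N) n = i0 ((lam (π0 n) : ↥(Subgroup.center K)) : K) * n) :
    RFixed θ jb lam ↔ ∀ q : Q, Θ q * mkNK i0 ηa = mkNK i0 ηa * Θ q := by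
  have core : ∀ (q : Q) (ν : ↥(autK i0)), mkNK i0 ν = Θ q →
      ((Θ q * mkNK i0 ηa = mkNK i0 ηa * Θ q) ↔
       (∃ z0 : ↥(Subgroup.center K), ∀ p p' : P, jb p' = q⁻¹ * jb p * q →
         outCenter K (θ q) (lam p') = z0⁻¹ * outCenter K (θ (jb p)) z0 * lam p)) := by
    intro q ν hν
    have hsp : ∀ p, π0 (Function.surjInv hπ0 p) = p := fun p => Function.surjInv_eq hπ0 p
    set s : P → N := Function.surjInv hπ0 with hs
    have hνinv : mkNK i0 ν⁻¹ = Θ q⁻¹ := by rw [map_inv, map_inv, hν]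
    have hcν : ((ν⁻¹ : ↥(autK i0)) : MulAut N) = (ν : MulAut N)⁻¹ := rfl
    have hp' : ∀ m : N, jb (π0 ((ν : MulAut N)⁻¹ m)) = q⁻¹ * jb (π0 m) * q := by
      intro m
      have h := hΘconjP q⁻¹ ν⁻¹ hνinv m
      rw [hcν, inv_inv] at h
      exact h
    set pm : P → P := fun p => π0 ((ν : MulAut N)⁻¹ (s p)) with hpm
    have hjpm : ∀ p, jb (pm p) = q⁻¹ * jb p * q := by
      intro p
      have := hp' (s p)
      rwa [hsp] at this
    have hpmn : ∀ n : N, pm (π0 n) = π0 ((ν : MulAut N)⁻¹ n) := by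
      intro n
      apply hjb
      rw [hjpm, hp']
    set w : P → ↥(Subgroup.center K) :=
      fun p => outCenter K (θ q) (lam (pm p)) * (lam p)⁻¹ with hw
    have hw1 : w 1 = 1 := by
      have hpm1 : pm 1 = 1 := by
        apply hjb
        rw [hjpm]
        simp
      show outCenter K (θ q) (lam (pm 1)) * (lam 1)⁻¹ = 1
      rw [hpm1, hlam.1]
      simp
    have heval : ∀ n : N, ((ν * ηa * ν⁻¹ * ηa⁻¹ : ↥(autK i0)) : MulAut N) n
        = i0 ((w (π0 n) : ↥(Subgroup.center K)) : K) * n := by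
      intro n
      set z := lam (π0 n) with hz
      set A := (ν : MulAut N)⁻¹ (i0 (z : K)) with hA
      set B := (ν : MulAut N)⁻¹ n with hB
      have hπA : π0 A = 1 := by
        obtain ⟨k', hk'⟩ : ∃ k', i0 k' = A := by
          have h := ((ν⁻¹ : ↥(autK i0)).2 (i0 (z : K))).mpr ⟨(z : K), rfl⟩
          rwa [hcν] at h
        rw [← hk', pi0I i0 π0 hker0]
      have step1 : ((ν * ηa * ν⁻¹ * ηa⁻¹ : ↥(autK i0)) : MulAut N) n
          = (ν : MulAut N) ((ηa : MulAut N) (A⁻¹ * B)) := by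
        have hc : ((ν * ηa * ν⁻¹ * ηa⁻¹ : ↥(autK i0)) : MulAut N) n
            = (ν : MulAut N) ((ηa : MulAut N) ((ν : MulAut N)⁻¹ ((ηa : MulAut N)⁻¹ n))) := rfl
        rw [hc, inv_formula i0 π0 hker0 lam (ηa : MulAut N) hηa n, map_mul, map_inv]
      have hπAB : π0 (A⁻¹ * B) = pm (π0 n) := by
        rw [map_mul, map_inv, hπA, inv_one, one_mul, hpmn n]
      have step2 : (ηa : MulAut N) (A⁻¹ * B)
          = i0 ((lam (pm (π0 n)) : ↥(Subgroup.center K)) : K) * (A⁻¹ * B) := by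
        rw [hηa, hπAB]
      rw [step1, step2, map_mul, map_mul, map_inv, MulAut.apply_inv_self, MulAut.apply_inv_self,
        ← lemC i0 θ hi0 Θ hΘK q ν hν (lam (pm (π0 n)))]
      show _ = i0 ((outCenter K (θ q) (lam (pm (π0 n))) * (lam (π0 n))⁻¹ :
        ↥(Subgroup.center K)) : K) * n
      rw [Subgroup.coe_mul, InvMemClass.coe_inv, map_mul, map_inv, mul_assoc]
    have hmm : (Θ q * mkNK i0 ηa = mkNK i0 ηa * Θ q) ↔ (ν * ηa * ν⁻¹ * ηa⁻¹ ∈ cInn i0) := by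
      rw [← hν, ← map_mul, ← map_mul]
      exact comm_mem_iff (cInn i0) ν ηa
    have hmem_iff : (ν * ηa * ν⁻¹ * ηa⁻¹ ∈ cInn i0) ↔
        ∃ k : K, ∀ n : N,
          i0 ((w (π0 n) : ↥(Subgroup.center K)) : K) * n = i0 k * n * (i0 k)⁻¹ := by
      constructor
      · rintro ⟨k, hk⟩
        refine ⟨k, fun n => ?_⟩
        rw [← heval n, hk]
        rfl
      · rintro ⟨k, hk⟩
        refine ⟨k, ?_⟩
        ext n
        rw [heval n, hk n]
        rfl
    rw [hmm, hmem_iff, keyChar i0 π0 jb θ hi0 hπ0 hker0 hθN w hw1]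
    constructor
    · rintro ⟨z0, h⟩
      refine ⟨z0⁻¹, fun p p' hpp' => ?_⟩
      have hp'eq : p' = pm p := by
        apply hjb
        rw [hpp', hjpm]
      have h2 : outCenter K (θ q) (lam (pm p))
          = z0 * (outCenter K (θ (jb p)) z0)⁻¹ * lam p := by
        have hwp : outCenter K (θ q) (lam (pm p)) * (lam p)⁻¹
            = z0 * (outCenter K (θ (jb p)) z0)⁻¹ := h p
        calc outCenter K (θ q) (lam (pm p))
            = outCenter K (θ q) (lam (pm p)) * (lam p)⁻¹ * lam p := by group
          _ = z0 * (outCenter K (θ (jb p)) z0)⁻¹ * lam p := by rw [hwp]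
      rw [hp'eq, h2, map_inv, inv_inv]
    · rintro ⟨z0, h⟩
      refine ⟨z0⁻¹, fun p => ?_⟩
      have h2 := h p (pm p) (hjpm p)
      show outCenter K (θ q) (lam (pm p)) * (lam p)⁻¹ = _
      rw [h2, map_inv, inv_inv]
      group
  constructor
  · intro hR q
    obtain ⟨ν, hν⟩ := QuotientGroup.mk'_surjective (cInn i0) (Θ q)
    exact (core q ν hν).mpr (hR q)
  · intro hC q
    obtain ⟨ν, hν⟩ := QuotientGroup.mk'_surjective (cInn i0) (Θ q)
    exact (core q ν hν).mp (hC q)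

end Helpers5
section Helpers6

variable {K P Q R N : Type*} [Group K] [Group P] [Group Q] [Group R] [Group N]

example (a b : ↥(Subgroup.center K)) : a * b = b * a := Subtype.ext (Subgroup.mem_center_iff.mp b.2 a)

lemma part3 (i0 : K →* N) (π0 : N →* P) (jb : P →* Q) (θ : Q →* Out K)
    (hi0 : Function.Injective i0) (hπ0 : Function.Surjective π0)
    (hker0 : i0.range = π0.ker)
    (hθN : ∀ (n : N) (κ : MulAut K),
      (∀ k, i0 (κ k) = n * i0 k * n⁻¹) → θ (jb (π0 n)) = toOut K κ)
    (lam1 lam2 : P → ↥(Subgroup.center K)) (ηa1 ηa2 : ↥(autK i0))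
    (hl1 : IsZ1P θ jb lam1) (hl2 : IsZ1P θ jb lam2)
    (hη1 : ∀ n : N, (ηa1 : MulAut N) n = i0 ((lam1 (π0 n) : ↥(Subgroup.center K)) : K) * n)
    (hη2 : ∀ n : N, (ηa2 : MulAut N) n = i0 ((lam2 (π0 n) : ↥(Subgroup.center K)) : K) * n) :
    mkNK i0 ηa1 = mkNK i0 ηa2 ↔
      ∃ z0 : ↥(Subgroup.center K), ∀ p : P,
        lam2 p = z0⁻¹ * outCenter K (θ (jb p)) z0 * lam1 p := by
  set w : P → ↥(Subgroup.center K) := fun p => (lam1 p)⁻¹ * lam2 p with hw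
  have hw1 : w 1 = 1 := by
    show (lam1 1)⁻¹ * lam2 1 = 1
    rw [hl1.1, hl2.1, inv_one, one_mul]
  have heval : ∀ n : N, ((ηa1⁻¹ * ηa2 : ↥(autK i0)) : MulAut N) n
      = i0 ((w (π0 n) : ↥(Subgroup.center K)) : K) * n := by
    intro n
    have hc : ((ηa1⁻¹ * ηa2 : ↥(autK i0)) : MulAut N) n
        = (ηa1 : MulAut N)⁻¹ ((ηa2 : MulAut N) n) := rfl
    rw [hc, hη2 n, inv_formula i0 π0 hker0 lam1 (ηa1 : MulAut N) hη1,
      pi0mul i0 π0 hker0]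
    show _ = i0 (((lam1 (π0 n))⁻¹ * lam2 (π0 n) : ↥(Subgroup.center K)) : K) * n
    rw [Subgroup.coe_mul, InvMemClass.coe_inv, map_mul, map_inv, mul_assoc]
  have base : mkNK i0 ηa1 = mkNK i0 ηa2 ↔ ηa1⁻¹ * ηa2 ∈ cInn i0 := QuotientGroup.eq
  rw [base]
  have hmem_iff : (ηa1⁻¹ * ηa2 ∈ cInn i0) ↔
      ∃ k : K, ∀ n : N,
        i0 ((w (π0 n) : ↥(Subgroup.center K)) : K) * n = i0 k * n * (i0 k)⁻¹ := by
    constructor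
    · rintro ⟨k, hk⟩
      refine ⟨k, fun n => ?_⟩
      rw [← heval n, hk]
      rfl
    · rintro ⟨k, hk⟩
      refine ⟨k, ?_⟩
      ext n
      rw [heval n, hk n]
      rfl
  rw [hmem_iff, keyChar i0 π0 jb θ hi0 hπ0 hker0 hθN w hw1]
  constructor
  · rintro ⟨z0, h⟩
    refine ⟨z0⁻¹, fun p => ?_⟩
    have h2 : z0 * (outCenter K (θ (jb p)) z0)⁻¹ = (lam1 p)⁻¹ * lam2 p := (h p).symm
    rw [map_inv, inv_inv]
    rw [h2, (Subtype.ext (Subgroup.mem_center_iff.mp (lam2 p).2 ((lam1 p)⁻¹ : ↥(Subgroup.center K))) :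
      (lam1 p)⁻¹ * lam2 p = lam2 p * (lam1 p)⁻¹)]
    group
  · rintro ⟨z0, h⟩
    refine ⟨z0⁻¹, fun p => ?_⟩
    show (lam1 p)⁻¹ * lam2 p = _
    rw [h p, map_inv, inv_inv]
    rw [(Subtype.ext (Subgroup.mem_center_iff.mp (lam1 p).2 (z0⁻¹ * outCenter K (θ (jb p)) z0)) :
      z0⁻¹ * outCenter K (θ (jb p)) z0 * lam1 p = lam1 p * (z0⁻¹ * outCenter K (θ (jb p)) z0))]
    group

lemma part5 (i0 : K →* N) (π0 : N →* P)
    (lam1 lam2 : P → ↥(Subgroup.center K)) (ηa1 ηa2 ηa12 : ↥(autK i0))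
    (hη1 : ∀ n : N, (ηa1 : MulAut N) n = i0 ((lam1 (π0 n) : ↥(Subgroup.center K)) : K) * n)
    (hη2 : ∀ n : N, (ηa2 : MulAut N) n = i0 ((lam2 (π0 n) : ↥(Subgroup.center K)) : K) * n)
    (hη12 : ∀ n : N, (ηa12 : MulAut N) n = i0 (((lam1 (π0 n) * lam2 (π0 n) :
        ↥(Subgroup.center K))) : K) * n)
    (hker0 : i0.range = π0.ker) :
    mkNK i0 ηa12 = mkNK i0 ηa1 * mkNK i0 ηa2 := by
  have : ηa12 = ηa1 * ηa2 := by
    apply autK_ext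
    intro n
    have hc : ((ηa1 * ηa2 : ↥(autK i0)) : MulAut N) n
        = (ηa1 : MulAut N) ((ηa2 : MulAut N) n) := rfl
    rw [hη12 n, hc, hη2 n, hη1, pi0mul i0 π0 hker0, Subgroup.coe_mul, map_mul, mul_assoc]
  rw [this, map_mul]

end Helpers6
section Helpers7

variable {K P Q R N : Type*} [Group K] [Group P] [Group Q] [Group R] [Group N]

lemma part4 (i0 : K →* N) (π0 : N →* P) (jb : P →* Q) (θ : Q →* Out K)
    (hi0 : Function.Injective i0) (hπ0 : Function.Surjective π0)
    (hker0 : i0.range = π0.ker) (hjb : Function.Injective jb)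
    (hθN : ∀ (n : N) (κ : MulAut K),
      (∀ k, i0 (κ k) = n * i0 k * n⁻¹) → θ (jb (π0 n)) = toOut K κ)
    (Θ : Q →* OutNK i0)
    (hΘK : ∀ (q : Q) (ν : ↥(autK i0)) (κ : MulAut K), mkNK i0 ν = Θ q →
      (∀ k, i0 (κ k) = (ν : MulAut N) (i0 k)) → θ q = toOut K κ)
    (hΘconjP : ∀ (q : Q) (ν : ↥(autK i0)), mkNK i0 ν = Θ q →
      ∀ n : N, jb (π0 ((ν : MulAut N) n)) = q * jb (π0 n) * q⁻¹)
    (ηa : ↥(autK i0))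
    (hfix : ∀ k : K, (ηa : MulAut N) (i0 k) = i0 k)
    (hproj : ∀ n : N, π0 ((ηa : MulAut N) n) = π0 n)
    (hcomm : ∀ q : Q, Θ q * mkNK i0 ηa = mkNK i0 ηa * Θ q) :
    ∃ lam : P → ↥(Subgroup.center K), IsZ1P θ jb lam ∧ RFixed θ jb lam ∧
      ∃ ηb : ↥(autK i0),
        (∀ n : N, (ηb : MulAut N) n = i0 ((lam (π0 n) : ↥(Subgroup.center K)) : K) * n) ∧
        mkNK i0 ηb = mkNK i0 ηa := by
  have hmem : ∀ n : N, ∃ k : K, i0 k = (ηa : MulAut N) n * n⁻¹ := by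
    intro n
    have h : (ηa : MulAut N) n * n⁻¹ ∈ π0.ker := by
      rw [MonoidHom.mem_ker, map_mul, map_inv, hproj, mul_inv_cancel]
    rw [← hker0] at h
    exact h
  choose kf hkf using hmem
  have hval : ∀ n, (ηa : MulAut N) n = i0 (kf n) * n := by
    intro n
    rw [hkf, inv_mul_cancel_right]
  have hcent : ∀ n, kf n ∈ Subgroup.center K := by
    intro n
    rw [Subgroup.mem_center_iff]
    intro g
    obtain ⟨g'', hg''⟩ : ∃ g'', i0 g'' = n⁻¹ * i0 g * n := by
      have h : n⁻¹ * i0 g * n ∈ π0.ker := by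
        rw [MonoidHom.mem_ker, map_mul, map_mul, map_inv, pi0I i0 π0 hker0, mul_one,
          inv_mul_cancel]
      rw [← hker0] at h
      exact h
    have hgg : n * i0 g'' * n⁻¹ = i0 g := by rw [hg'']; group
    have h1 : (ηa : MulAut N) (n * i0 g'' * n⁻¹) = n * i0 g'' * n⁻¹ := by
      rw [hgg, hfix]
    rw [map_mul, map_mul, map_inv, hval n, hfix g''] at h1
    -- h1 : i0 (kf n) * n * i0 g'' * (i0 (kf n) * n)⁻¹ = n * i0 g'' * n⁻¹
    have h2 : i0 (kf n) * (n * i0 g'' * n⁻¹) * (i0 (kf n))⁻¹ = n * i0 g'' * n⁻¹ := by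
      calc i0 (kf n) * (n * i0 g'' * n⁻¹) * (i0 (kf n))⁻¹
          = i0 (kf n) * n * i0 g'' * (i0 (kf n) * n)⁻¹ := by group
        _ = n * i0 g'' * n⁻¹ := h1
    rw [hgg] at h2
    apply hi0
    rw [map_mul, map_mul]
    rw [mul_inv_eq_iff_eq_mul] at h2
    rw [← h2]
  have hind : ∀ m n : N, π0 m = π0 n → kf m = kf n := by
    intro m n h
    obtain ⟨a, ha⟩ : ∃ a, i0 a = m * n⁻¹ := by
      have h' : m * n⁻¹ ∈ π0.ker := by
        rw [MonoidHom.mem_ker, map_mul, map_inv, h, mul_inv_cancel]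
      rw [← hker0] at h'
      exact h'
    have hm : m = i0 a * n := by rw [ha]; group
    apply hi0
    rw [hkf, hkf, hm, map_mul, hfix, hval n]
    have hc : i0 a * (i0 (kf n) * n) = i0 (kf n) * (i0 a * n) := by
      rw [← mul_assoc, ← mul_assoc, ← map_mul, ← map_mul,
        Subgroup.mem_center_iff.mp (hcent n) a]
    rw [hc]
    group
  set s : P → N := Function.surjInv hπ0 with hs
  have hsp : ∀ p, π0 (s p) = p := fun p => Function.surjInv_eq hπ0 p
  set lam : P → ↥(Subgroup.center K) := fun p => ⟨kf (s p), hcent (s p)⟩ with hlamdef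
  have hηb : ∀ n : N, (ηa : MulAut N) n
      = i0 ((lam (π0 n) : ↥(Subgroup.center K)) : K) * n := by
    intro n
    rw [hval n]
    congr 2
    exact (hind (s (π0 n)) n (hsp (π0 n))).symm
  have hlam : IsZ1P θ jb lam := by
    constructor
    · apply Subtype.ext
      show kf (s 1) = 1
      have h1 : kf (s 1) = kf 1 := hind (s 1) 1 (by rw [hsp, map_one])
      apply hi0
      rw [h1, hkf, map_one, map_one, inv_one, mul_one]
    · intro p1 p2
      have e1 : (ηa : MulAut N) (s p1 * s p2)
          = i0 ((lam (p1 * p2) : ↥(Subgroup.center K)) : K) * (s p1 * s p2) := by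
        rw [hηb, map_mul, hsp, hsp]
      have e2 : (ηa : MulAut N) (s p1 * s p2)
          = i0 ((lam p1 : ↥(Subgroup.center K)) : K) *
            (s p1 * i0 ((lam p2 : ↥(Subgroup.center K)) : K) * (s p1)⁻¹) *
            (s p1 * s p2) := by
        rw [map_mul, hηb (s p1), hηb (s p2), hsp, hsp]
        group
      have e3 := lemB i0 π0 jb θ hi0 hker0 hθN (s p1) (lam p2)
      rw [hsp] at e3
      rw [← e3] at e2
      have e4 := e1.symm.trans e2
      have e5 := mul_right_cancel e4
      apply Subtype.ext
      apply hi0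
      rw [Subgroup.coe_mul, map_mul]
      exact e5
  refine ⟨lam, hlam, ?_, ηa, hηb, rfl⟩
  exact (part2 i0 π0 jb θ hi0 hπ0 hker0 hjb hθN Θ hΘK hΘconjP lam ηa hlam hηb).mpr hcomm

end Helpers7


/-- For an iterated extension problem `(KNP,PQR,Θ)`, the canonical
isomorphism `H¹(P,Z(K)) ≃ Out(KNP;K)` restricts to a group isomorphism of the
`R`-fixed subgroup `H¹(P,Z(K))^R` onto `Out_Θ(KNP;K)`, the subgroup of `Θ`-compatible
classes. -/
theorem statement8
    {K P Q R N : Type*} [Group K] [Group P] [Group Q] [Group R] [Group N]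
    (i0 : K →* N) (π0 : N →* P) (jb : P →* Q) (fb : Q →* R) (θ : Q →* Out K)
    (hi0 : Function.Injective i0) (hπ0 : Function.Surjective π0)
    (hker0 : i0.range = π0.ker)
    (hjb : Function.Injective jb) (hfb : Function.Surjective fb)
    (hker1 : jb.range = fb.ker)
    (hθN : ∀ (n : N) (κ : MulAut K),
      (∀ k, i0 (κ k) = n * i0 k * n⁻¹) → θ (jb (π0 n)) = toOut K κ)
    (ΘP : P →* OutNK i0)
    (hΘP : ∀ (n : N) (ν : ↥(autK i0)),
      (∀ m : N, (ν : MulAut N) m = n * m * n⁻¹) → ΘP (π0 n) = mkNK i0 ν)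
    (Θ : Q →* OutNK i0)
    (hΘjb : ∀ p : P, Θ (jb p) = ΘP p)
    (hΘK : ∀ (q : Q) (ν : ↥(autK i0)) (κ : MulAut K), mkNK i0 ν = Θ q →
      (∀ k, i0 (κ k) = (ν : MulAut N) (i0 k)) → θ q = toOut K κ)
    (hΘconjP : ∀ (q : Q) (ν : ↥(autK i0)), mkNK i0 ν = Θ q →
      ∀ n : N, jb (π0 ((ν : MulAut N) n)) = q * jb (π0 n) * q⁻¹) :
    -- well-definedness: each 1-cocycle of P yields an element of Aut_K(N)
    (∀ lam : P → ↥(Subgroup.center K), IsZ1P θ jb lam →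
      ∃ ηa : ↥(autK i0), ∀ n : N, (ηa : MulAut N) n = i0 (lam (π0 n) : K) * n) ∧
    -- the class of λ is R-fixed iff the corresponding class η̄ is Θ-compatible
    (∀ (lam : P → ↥(Subgroup.center K)) (ηa : ↥(autK i0)), IsZ1P θ jb lam →
      (∀ n : N, (ηa : MulAut N) n = i0 (lam (π0 n) : K) * n) →
      (RFixed θ jb lam ↔ ∀ q : Q, Θ q * mkNK i0 ηa = mkNK i0 ηa * Θ q)) ∧
    -- the induced map on classes is injective: equal classes iff cohomologous cocycles
    (∀ (lam1 lam2 : P → ↥(Subgroup.center K)) (ηa1 ηa2 : ↥(autK i0)),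
      IsZ1P θ jb lam1 → IsZ1P θ jb lam2 →
      (∀ n : N, (ηa1 : MulAut N) n = i0 (lam1 (π0 n) : K) * n) →
      (∀ n : N, (ηa2 : MulAut N) n = i0 (lam2 (π0 n) : K) * n) →
      (mkNK i0 ηa1 = mkNK i0 ηa2 ↔
        ∃ z0 : ↥(Subgroup.center K), ∀ p : P,
          lam2 p = z0⁻¹ * outCenter K (θ (jb p)) z0 * lam1 p)) ∧
    -- surjectivity onto Out_Θ(KNP;K)
    (∀ ηa : ↥(autK i0),
      (∀ k : K, (ηa : MulAut N) (i0 k) = i0 k) →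
      (∀ n : N, π0 ((ηa : MulAut N) n) = π0 n) →
      (∀ q : Q, Θ q * mkNK i0 ηa = mkNK i0 ηa * Θ q) →
      ∃ lam : P → ↥(Subgroup.center K), IsZ1P θ jb lam ∧ RFixed θ jb lam ∧
        ∃ ηb : ↥(autK i0), (∀ n : N, (ηb : MulAut N) n = i0 (lam (π0 n) : K) * n) ∧
          mkNK i0 ηb = mkNK i0 ηa) ∧
    -- the map on classes is multiplicative
    (∀ (lam1 lam2 : P → ↥(Subgroup.center K)) (ηa1 ηa2 ηa12 : ↥(autK i0)),
      IsZ1P θ jb lam1 → IsZ1P θ jb lam2 →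
      (∀ n : N, (ηa1 : MulAut N) n = i0 (lam1 (π0 n) : K) * n) →
      (∀ n : N, (ηa2 : MulAut N) n = i0 (lam2 (π0 n) : K) * n) →
      (∀ n : N, (ηa12 : MulAut N) n = i0 ((lam1 (π0 n) * lam2 (π0 n) :
          ↥(Subgroup.center K)) : K) * n) →
      mkNK i0 ηa12 = mkNK i0 ηa1 * mkNK i0 ηa2) := by
  refine ⟨fun lam hlam => buildAut i0 π0 jb θ hi0 hker0 hθN lam hlam,
    fun lam ηa hlam hηa => part2 i0 π0 jb θ hi0 hπ0 hker0 hjb hθN Θ hΘK hΘconjP lam ηa hlam hηa,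
    fun lam1 lam2 ηa1 ηa2 hl1 hl2 hη1 hη2 =>
      part3 i0 π0 jb θ hi0 hπ0 hker0 hθN lam1 lam2 ηa1 ηa2 hl1 hl2 hη1 hη2,
    fun ηa hfix hproj hc =>
      part4 i0 π0 jb θ hi0 hπ0 hker0 hjb hθN Θ hΘK hΘconjP ηa hfix hproj hc,
    fun lam1 lam2 ηa1 ηa2 ηa12 _ _ hη1 hη2 hη12 =>
      part5 i0 π0 lam1 lam2 ηa1 ηa2 ηa12 hη1 hη2 hη12 hker0⟩

end IES
end

section
/- Let (G,i,π) be an extension of K by Q with outer action θ, let N := π⁻¹(j̄(P)) with the induced extension structure (N,i₀,π₀) of K by P (the P-subextension), let j : N ↪ G be the inclusion, and let Θ : Q → Out(N;K) be the mod-K outer action of the iterated extension (G,j,π). Then every ξ ∈ Aut(KGQ) maps j(N) onto itself, its restriction ξ|_N belongs to Aut(KNP) and is Θ-compatible; moreover, under the canonical isomorphisms H^1(Q,Z(K)) ≅ Out(KGQ;K) and H^1(P,Z(K))^R ≅ Out_Θ(KNP;K), the homomorphism Out(KGQ;K) → Out_Θ(KNP;K) induced by ξ ↦ ξ|_N corresponds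 to the restriction map res : H^1(Q,Z(K)) → H^1(P,Z(K))^R, [λ] ↦ [p ↦ λ(j̄(p))]. -/
namespace IES

/-- Auxiliary: an automorphism of `G` stabilizing the image of an injective `j : N →* G`
restricts to an automorphism of `N`. -/
theorem restrict_exists {N G : Type*} [Group N] [Group G] (j : N →* G)
    (hj : Function.Injective j) (e : MulAut G)
    (h1 : ∀ n : N, e (j n) ∈ j.range) (h2 : ∀ n : N, e⁻¹ (j n) ∈ j.range) :
    ∃ η : MulAut N, ∀ n, j (η n) = e (j n) := by
  choose f hf using h1
  choose g hg using h2
  refine ⟨MulEquiv.mk ⟨f, g, fun n => hj ?_, fun n => hj ?_⟩ (fun a b => hj ?_), hf⟩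
  · rw [hg (f n), hf n, e.inv_apply_self]
  · rw [hf (g n), hg n, e.apply_inv_self]
  · rw [hf (a * b), map_mul, map_mul, map_mul, hf a, hf b]

/-- Let `(G,i,π)` be an extension of `K` by `Q` with outer action
`θ`, with `P`-subextension `(N,i₀,π₀)` (inclusion `j`, so `i = j∘i₀`), and let `Θ` be
the mod-`K` outer action of the iterated extension `(G,j,π)`.  Every `ξ ∈ Aut(KGQ)`
stabilizes `j(N)`; its restriction `ξ|_N` lies in `Aut(KNP)` and is `Θ`-compatible,
and under the canonical isomorphisms the map `ξ ↦ ξ|_N` corresponds to the restriction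
map `res : H¹(Q,Z(K)) → H¹(P,Z(K))^R`. -/
theorem statement9
    {K P Q R N G : Type*} [Group K] [Group P] [Group Q] [Group R] [Group N] [Group G]
    (i0 : K →* N) (π0 : N →* P) (jb : P →* Q) (fb : Q →* R)
    (j : N →* G) (π : G →* Q) (θ : Q →* Out K)
    (hi0 : Function.Injective i0) (hπ0 : Function.Surjective π0)
    (hker0 : i0.range = π0.ker)
    (hjb : Function.Injective jb) (hfb : Function.Surjective fb)
    (hker1 : jb.range = fb.ker)
    (hj : Function.Injective j) (hπ : Function.Surjective π)
    (hcomm : π.comp j = jb.comp π0)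
    (hkerφ : j.range = (fb.comp π).ker)
    (hkerπ : (j.comp i0).range = π.ker)
    (hθ : ∀ (g : G) (κ : MulAut K),
      (∀ k, (j.comp i0) (κ k) = g * (j.comp i0) k * g⁻¹) → θ (π g) = toOut K κ)
    -- Θ is the mod-K outer action of the iterated extension (G,j,π)
    (Θ : Q →* OutNK i0)
    (hΘ : ∀ (g : G) (ν : ↥(autK i0)),
      (∀ n : N, j ((ν : MulAut N) n) = g * j n * g⁻¹) → Θ (π g) = mkNK i0 ν)
    -- an automorphism of the extension (KGQ)
    (ξ : MulAut G)
    (hξi : ∀ k : K, ξ ((j.comp i0) k) = (j.comp i0) k)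
    (hξπ : ∀ g : G, π (ξ g) = π g) :
    ∃ η : MulAut N,
      -- ξ maps j(N) onto itself, with restriction η
      (∀ n : N, j (η n) = ξ (j n)) ∧
      -- η belongs to Aut(KNP)
      (∀ k : K, η (i0 k) = i0 k) ∧
      (∀ n : N, π0 (η n) = π0 n) ∧
      -- η is Θ-compatible
      (∀ ηa : ↥(autK i0), (ηa : MulAut N) = η →
        ∀ q : Q, Θ q * mkNK i0 ηa = mkNK i0 ηa * Θ q) ∧
      -- under the canonical isomorphisms, ξ ↦ ξ|_N corresponds to the restriction map
      -- on cocycles, which lands in the R-fixed classes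
      (∀ lam : Q → ↥(Subgroup.center K), IsZ1Q θ lam →
        (∀ g : G, ξ g = (j.comp i0) (lam (π g) : K) * g) →
        (∀ n : N, η n = i0 (lam (jb (π0 n)) : K) * n) ∧
        IsZ1P θ jb (fun p => lam (jb p)) ∧
        RFixed θ jb (fun p => lam (jb p))) := by
  classical
  have hπj : ∀ n : N, π (j n) = jb (π0 n) := fun n => DFunLike.congr_fun hcomm n
  have hrange : ∀ x : G, x ∈ j.range ↔ fb (π x) = 1 := by
    intro x; rw [hkerφ]; exact Iff.rfl
  have hfbπj : ∀ n : N, fb (π (j n)) = 1 := by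
    intro n
    rw [hπj, ← MonoidHom.mem_ker, ← hker1]
    exact ⟨π0 n, rfl⟩
  have hπξinv : ∀ x : G, π (ξ⁻¹ x) = π x := by
    intro x
    conv_rhs => rw [← MulAut.apply_inv_self G ξ x, hξπ]
  obtain ⟨η, hη⟩ := restrict_exists j hj ξ
    (fun n => (hrange _).mpr (by rw [hξπ]; exact hfbπj n))
    (fun n => (hrange _).mpr (by rw [hπξinv]; exact hfbπj n))
  have hηinv : ∀ n : N, j (η⁻¹ n) = ξ⁻¹ (j n) := by
    intro n
    have h := hη (η⁻¹ n)
    rw [MulAut.apply_inv_self _] at h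
    rw [h, MulAut.inv_apply_self _]
  refine ⟨η, hη, ?_, ?_, ?_, ?_⟩
  · -- η fixes i0(K) pointwise
    intro k
    apply hj
    rw [hη]
    exact hξi k
  · -- η commutes with π0
    intro n
    apply hjb
    rw [← hπj, ← hπj, hη, hξπ]
  · -- Θ-compatibility
    intro ηa hηa q
    obtain ⟨g, rfl⟩ := hπ q
    have hconjmem : ∀ (x : G) (y : N), x * j y * x⁻¹ ∈ j.range := by
      intro x y
      rw [hrange, map_mul, map_mul, map_inv, map_mul, map_mul, map_inv, hfbπj,
        mul_one, mul_inv_cancel]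
    obtain ⟨ν, hν⟩ := restrict_exists j hj (MulAut.conj g)
      (fun n => by simpa [MulAut.conj_apply] using hconjmem g n)
      (fun n => by rw [← map_inv]; simpa [MulAut.conj_apply] using hconjmem g⁻¹ n)
    have hν' : ∀ n : N, j (ν n) = g * j n * g⁻¹ := by
      intro n; rw [hν n, MulAut.conj_apply]
    have hνinv : ∀ m : N, j (ν⁻¹ m) = g⁻¹ * j m * g := by
      intro m
      have h := hν' (ν⁻¹ m)
      rw [MulAut.apply_inv_self _] at h
      rw [h]; group
    have hmem0 : ∀ m : N, m ∈ i0.range ↔ π0 m = 1 := by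
      intro m; rw [hker0]; exact Iff.rfl
    have key : ∀ n : N, jb (π0 (ν n)) = π g * jb (π0 n) * (π g)⁻¹ := by
      intro n; rw [← hπj, hν' n, map_mul, map_mul, map_inv, hπj]
    have hνmem : ν ∈ autK i0 := by
      intro n
      rw [hmem0, hmem0]
      have k := key n
      constructor
      · intro h
        rw [h, map_one] at k
        have hx : jb (π0 n) = 1 := by
          calc jb (π0 n) = (π g)⁻¹ * (π g * jb (π0 n) * (π g)⁻¹) * π g := by group
            _ = 1 := by rw [← k]; group
        exact hjb (by rw [hx, map_one])
      · intro h
        have hx : jb (π0 (ν n)) = 1 := by rw [k, h, map_one, mul_one, mul_inv_cancel]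
        exact hjb (by rw [hx, map_one])
    set νa : ↥(autK i0) := ⟨ν, hνmem⟩ with hνadef
    have hνa : (νa : MulAut N) = ν := rfl
    have hΘg : Θ (π g) = mkNK i0 νa := hΘ g νa (fun n => by rw [hνa, hν' n])
    -- commutator lies in cInn
    have hc : π ((ξ⁻¹ g)⁻¹ * g) = 1 := by
      rw [map_mul, map_inv, hπξinv, inv_mul_cancel]
    obtain ⟨k, hk⟩ : (ξ⁻¹ g)⁻¹ * g ∈ (j.comp i0).range := by rw [hkerπ]; exact hc
    have hwn : ∀ n : N, j (η⁻¹ (ν⁻¹ (η (ν n)))) =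
        ((ξ⁻¹ g)⁻¹ * g) * j n * ((ξ⁻¹ g)⁻¹ * g)⁻¹ := by
      intro n
      rw [hηinv, hνinv, hη, hν', map_mul, map_mul, map_inv, MulAut.inv_apply_self _]
      group
    have hwmem : (νa * ηa)⁻¹ * (ηa * νa) ∈ cInn i0 := by
      refine ⟨k, ?_⟩
      ext n
      apply hj
      have lhs : (((νa * ηa)⁻¹ * (ηa * νa) : ↥(autK i0)) : MulAut N) n
          = η⁻¹ (ν⁻¹ (η (ν n))) := by
        simp [Subgroup.coe_mul, mul_inv_rev, MulAut.mul_apply, hηa, hνa]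
      rw [lhs, hwn n, MulAut.conj_apply, map_mul, map_mul, map_inv,
        show j (i0 k) = (ξ⁻¹ g)⁻¹ * g from hk]
    rw [hΘg, ← map_mul, ← map_mul]
    exact (QuotientGroup.mk'_eq_mk' (N := cInn i0)).mpr ⟨_, hwmem, by group⟩
  · -- cocycle correspondence
    intro lam hlam hξlam
    have hcomm' : ∀ a b : ↥(Subgroup.center K), a * b = b * a := by
      intro a b
      exact Subtype.ext ((Subgroup.mem_center_iff.mp a.2 b.1).symm)
    refine ⟨?_, ⟨?_, ?_⟩, ?_⟩
    · intro n
      apply hj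
      rw [hη, hξlam (j n), hπj n, map_mul]
      rfl
    · show lam (jb 1) = 1
      rw [map_one]; exact hlam.1
    · intro p1 p2
      show lam (jb (p1 * p2)) = lam (jb p1) * outCenter K (θ (jb p1)) (lam (jb p2))
      rw [map_mul]; exact hlam.2 _ _
    · intro q
      refine ⟨lam q, ?_⟩
      intro p p' hpp'
      show outCenter K (θ q) (lam (jb p')) =
        (lam q)⁻¹ * outCenter K (θ (jb p)) (lam q) * lam (jb p)
      have h1 : jb p * q = q * jb p' := by rw [hpp']; group
      have h2 := hlam.2 (jb p) q
      have h3 := hlam.2 q (jb p')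
      rw [h1, h3] at h2
      calc outCenter K (θ q) (lam (jb p'))
          = (lam q)⁻¹ * (lam q * outCenter K (θ q) (lam (jb p'))) := by group
        _ = (lam q)⁻¹ * (lam (jb p) * outCenter K (θ (jb p)) (lam q)) := by rw [← h2]
        _ = (lam q)⁻¹ * outCenter K (θ (jb p)) (lam q) * lam (jb p) := by
            rw [hcomm' (lam (jb p)) _, mul_assoc]

end IES
end

section
/- Let (G,j,π) be an iterated extension of (KNP) by (PQR) with mod-K outer action Θ, set i := j∘i₀ and φ := φ̄∘π, fix a section ū : R → Q of φ̄ with ū(1) = 1 and a map Δ : R → Aut_K(N) with Δ(1) = id whose composite with the quotient Aut_K(N) → Out(N;K) equals Θ∘ū. Then there exists a section u : R → G of φ with u(1) = 1 such that π∘u = ū and 𝒞_N^G∘u = Δ (so that (G,j,π,u) is a (ū,Δ)-sectioned iterated extension). Moreover, for any map c : R → Z(K)^P with c(1) = 1, the map r ↦ i(c(r))·u(r) is again such a section, and every section with these properties arises from u in this way. -/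
namespace IES

/-- Let `(G,j,π)` be an iterated extension with mod-`K` outer
action `Θ`, `ū` a section of `φ̄` and `Δ` a lifting of `Θ∘ū` to `Aut_K(N)`.  Then
there is a section `u` of `φ` with `π∘u = ū` and `𝒞_N^G∘u = Δ`; multiplying `u` by a
map `R → Z(K)^P` gives again such a section, and all such sections arise this way. -/
theorem statement11
    {K P Q R N G : Type*} [Group K] [Group P] [Group Q] [Group R] [Group N] [Group G]
    (i0 : K →* N) (π0 : N →* P) (jb : P →* Q) (fb : Q →* R)
    (j : N →* G) (π : G →* Q) (θ : Q →* Out K)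
    (hi0 : Function.Injective i0) (hπ0 : Function.Surjective π0)
    (hker0 : i0.range = π0.ker)
    (hjb : Function.Injective jb) (hfb : Function.Surjective fb)
    (hker1 : jb.range = fb.ker)
    (hj : Function.Injective j) (hπ : Function.Surjective π)
    (hcomm : π.comp j = jb.comp π0)
    (hkerφ : j.range = (fb.comp π).ker)
    (hkerπ : (j.comp i0).range = π.ker)
    (hθ : ∀ (g : G) (κ : MulAut K),
      (∀ k, (j.comp i0) (κ k) = g * (j.comp i0) k * g⁻¹) → θ (π g) = toOut K κ)
    -- Θ is the mod-K outer action of the iterated extension (G,j,π)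
    (Θ : Q →* OutNK i0)
    (hΘ : ∀ (g : G) (ν : ↥(autK i0)),
      (∀ n : N, j ((ν : MulAut N) n) = g * j n * g⁻¹) → Θ (π g) = mkNK i0 ν)
    -- a section ū of φ̄ and a lifting Δ of Θ∘ū
    (ub : R → Q) (hub : ∀ r, fb (ub r) = r) (hub1 : ub 1 = 1)
    (Δ : R → ↥(autK i0)) (hΔ1 : Δ 1 = 1)
    (hΔ : ∀ r : R, mkNK i0 (Δ r) = Θ (ub r)) :
    -- existence of a section u with π∘u = ū and 𝒞_N^G∘u = Δ
    (∃ u : R → G, (∀ r, π (u r) = ub r) ∧ u 1 = 1 ∧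
      ∀ (r : R) (n : N), j ((Δ r : MulAut N) n) = u r * j n * (u r)⁻¹) ∧
    -- multiplying such a section by a map into Z(K)^P gives another one, and every
    -- such section arises this way
    (∀ u : R → G, (∀ r, π (u r) = ub r) → u 1 = 1 →
      (∀ (r : R) (n : N), j ((Δ r : MulAut N) n) = u r * j n * (u r)⁻¹) →
      (∀ c : R → ↥(Subgroup.center K), c 1 = 1 →
        (∀ (r : R) (p : P), outCenter K (θ (jb p)) (c r) = c r) →
        (∀ r, π ((j.comp i0) (c r : K) * u r) = ub r) ∧
        (j.comp i0) (c 1 : K) * u 1 = 1 ∧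
        (∀ (r : R) (n : N), j ((Δ r : MulAut N) n) =
          ((j.comp i0) (c r : K) * u r) * j n * ((j.comp i0) (c r : K) * u r)⁻¹)) ∧
      (∀ u' : R → G, (∀ r, π (u' r) = ub r) → u' 1 = 1 →
        (∀ (r : R) (n : N), j ((Δ r : MulAut N) n) = u' r * j n * (u' r)⁻¹) →
        ∃ c : R → ↥(Subgroup.center K), c 1 = 1 ∧
          (∀ (r : R) (p : P), outCenter K (θ (jb p)) (c r) = c r) ∧
          ∀ r : R, u' r = (j.comp i0) (c r : K) * u r)) := by
  classical
  -- basic consequences of the kernel identifications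
  have hπji : ∀ k : K, π (j (i0 k)) = 1 := by
    intro k
    have : j (i0 k) ∈ π.ker := hkerπ ▸ ⟨k, rfl⟩
    exact this
  have hπj : ∀ n : N, π (j n) = jb (π0 n) := fun n => DFunLike.congr_fun hcomm n
  have hmemi0 : ∀ n : N, n ∈ i0.range ↔ π (j n) = 1 := by
    intro n
    constructor
    · rintro ⟨k, rfl⟩; exact hπji k
    · intro h
      have h2 : j n ∈ (j.comp i0).range := by rw [hkerπ]; exact h
      obtain ⟨k, hk⟩ := h2
      exact ⟨k, hj hk⟩
  -- the conjugation action of N on K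
  have i0ker : ∀ k : K, i0 k ∈ π0.ker := fun k => hker0 ▸ ⟨k, rfl⟩
  let e1 : K ≃* π0.ker :=
    (MonoidHom.ofInjective hi0).trans (MulEquiv.subgroupCongr hker0)
  have he1 : ∀ k : K, (e1 k : N) = i0 k := by
    intro k
    simp only [e1, MulEquiv.trans_apply, MulEquiv.subgroupCongr_apply,
      MonoidHom.ofInjective_apply]
  have he1s : ∀ x : π0.ker, i0 (e1.symm x) = (x : N) := by
    intro x
    rw [← he1, e1.apply_symm_apply]
  let κ : N → MulAut K := fun n => (e1.trans (MulAut.conjNormal n)).trans e1.symm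
  have hκ : ∀ (n : N) (k : K), i0 (κ n k) = n * i0 k * n⁻¹ := by
    intro n k
    show i0 (e1.symm (MulAut.conjNormal n (e1 k))) = _
    rw [he1s, MulAut.conjNormal_apply, he1]
  have hθκ : ∀ n : N, θ (jb (π0 n)) = toOut K (κ n) := by
    intro n
    rw [← hπj n]
    refine hθ (j n) (κ n) ?_
    intro k
    show j (i0 (κ n k)) = j n * j (i0 k) * (j n)⁻¹
    rw [hκ, map_mul, map_mul, map_inv]
  have hout : ∀ (η : MulAut K) (z : Subgroup.center K),
      (outCenter K (toOut K η) z : K) = η (z : K) := fun η z => rfl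
  -- fixedness under the P-action is equivalent to commuting with all of N
  have hfix_iff : ∀ z : Subgroup.center K,
      (∀ p : P, outCenter K (θ (jb p)) z = z) ↔
      (∀ n : N, i0 (z : K) * n = n * i0 (z : K)) := by
    intro z
    constructor
    · intro h n
      have h1 := h (π0 n)
      rw [hθκ n] at h1
      have h2 : (outCenter K (toOut K (κ n)) z : K) = (z : K) := by rw [h1]
      rw [hout] at h2
      have h3 : i0 (κ n (z : K)) = i0 (z : K) := by rw [h2]
      rw [hκ] at h3
      conv_lhs => rw [← h3]
      group
    · intro h p
      obtain ⟨n, rfl⟩ := hπ0 p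
      rw [hθκ n]
      refine Subtype.ext ?_
      rw [hout]
      apply hi0
      rw [hκ]
      rw [← h n]
      group
  -- the conjugation action of G on N
  let e2 : N ≃* (fb.comp π).ker :=
    (MonoidHom.ofInjective hj).trans (MulEquiv.subgroupCongr hkerφ)
  have he2 : ∀ n : N, (e2 n : G) = j n := by
    intro n
    simp only [e2, MulEquiv.trans_apply, MulEquiv.subgroupCongr_apply,
      MonoidHom.ofInjective_apply]
  have he2s : ∀ x : (fb.comp π).ker, j (e2.symm x) = (x : G) := by
    intro x
    rw [← he2, e2.apply_symm_apply]
  let ν : G → MulAut N := fun g => (e2.trans (MulAut.conjNormal g)).trans e2.symm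
  have hν : ∀ (g : G) (n : N), j (ν g n) = g * j n * g⁻¹ := by
    intro g n
    show j (e2.symm (MulAut.conjNormal g (e2 n))) = _
    rw [he2s, MulAut.conjNormal_apply, he2]
  have hνmem : ∀ g : G, ν g ∈ autK i0 := by
    intro g n
    rw [hmemi0, hmemi0]
    have h1 : π (j (ν g n)) = π g * π (j n) * (π g)⁻¹ := by
      rw [hν, map_mul, map_mul, map_inv]
    rw [h1]
    constructor
    · intro h
      have : π (j n) = (π g)⁻¹ * 1 * π g := by rw [← h]; group
      rw [this]; group
    · intro h; rw [h]; group
  -- choose preimages under π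
  choose s hs using hπ
  let νK : R → ↥(autK i0) := fun r => ⟨ν (s (ub r)), hνmem _⟩
  have hΘν : ∀ r : R, Θ (ub r) = mkNK i0 (νK r) := by
    intro r
    rw [← hs (ub r)]
    exact hΘ (s (ub r)) (νK r) (fun n => hν _ n)
  have hexk : ∀ r : R, ∃ k : K,
      (Δ r : MulAut N) = (νK r : MulAut N) * MulAut.conj (i0 k) := by
    intro r
    have h1 : mkNK i0 ((νK r)⁻¹ * Δ r) = 1 := by
      rw [map_mul, map_inv, hΔ r, hΘν r]
      group
    have h2 : (νK r)⁻¹ * Δ r ∈ cInn i0 := (QuotientGroup.eq_one_iff _).mp h1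
    obtain ⟨k, hk⟩ := h2
    refine ⟨k, ?_⟩
    rw [Subgroup.coe_mul, Subgroup.coe_inv] at hk
    rw [← hk, mul_inv_cancel_left]
  choose kk hkk using hexk
  -- existence of a section u
  have main : ∃ u : R → G, (∀ r, π (u r) = ub r) ∧ u 1 = 1 ∧
      ∀ (r : R) (n : N), j ((Δ r : MulAut N) n) = u r * j n * (u r)⁻¹ := by
    set u : R → G := fun r => if r = 1 then 1 else s (ub r) * j (i0 (kk r)) with hu_def
    refine ⟨u, ?_, ?_, ?_⟩
    · intro r
      by_cases hr : r = 1
      · subst hr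
        simp [u, hub1]
      · have : u r = s (ub r) * j (i0 (kk r)) := by simp [u, hr]
        rw [this, map_mul, hπji, hs, mul_one]
    · simp [u]
    · intro r n
      by_cases hr : r = 1
      · subst hr
        have hu1 : u 1 = 1 := by simp [u]
        rw [hΔ1, hu1]
        simp
      · have hur : u r = s (ub r) * j (i0 (kk r)) := by simp [u, hr]
        have h1 : (Δ r : MulAut N) n =
            (νK r : MulAut N) (MulAut.conj (i0 (kk r)) n) := by
          rw [hkk r]; rfl
        rw [h1, hur]
        have h2 : ((νK r : MulAut N) : MulAut N) = ν (s (ub r)) := rfl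
        rw [h2, hν, MulAut.conj_apply, map_mul, map_mul, map_inv]
        group
  refine ⟨main, ?_⟩
  intro u huπ hu1 huΔ
  constructor
  · -- multiplying by a map into Z(K)^P
    intro c hc1 hcP
    have hcN : ∀ (r : R) (n : N), i0 ((c r : K)) * n = n * i0 ((c r : K)) :=
      fun r => (hfix_iff (c r)).mp (fun p => hcP r p)
    refine ⟨?_, ?_, ?_⟩
    · intro r
      show π (j (i0 (c r : K)) * u r) = ub r
      rw [map_mul, hπji, one_mul, huπ]
    · show j (i0 ((c 1 : Subgroup.center K) : K)) * u 1 = 1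
      rw [hc1, hu1]
      simp
    · intro r n
      show j ((Δ r : MulAut N) n) =
        (j (i0 (c r : K)) * u r) * j n * (j (i0 (c r : K)) * u r)⁻¹
      have hcc : j (i0 (c r : K)) * j ((Δ r : MulAut N) n) =
          j ((Δ r : MulAut N) n) * j (i0 (c r : K)) := by
        rw [← map_mul, ← map_mul, hcN r _]
      have h3 : (j (i0 (c r : K)) * u r) * j n * (j (i0 (c r : K)) * u r)⁻¹ =
          j (i0 (c r : K)) * (u r * j n * (u r)⁻¹) * (j (i0 (c r : K)))⁻¹ := by
        group
      rw [h3, ← huΔ r n, hcc, mul_inv_cancel_right]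
  · -- all sections arise this way
    intro u' hu'π hu'1 hu'Δ
    have hex : ∀ r : R, ∃ k : K, u' r = j (i0 k) * u r := by
      intro r
      have h1 : π (u' r * (u r)⁻¹) = 1 := by
        rw [map_mul, map_inv, hu'π, huπ]
        group
      have h2 : u' r * (u r)⁻¹ ∈ (j.comp i0).range := by rw [hkerπ]; exact h1
      obtain ⟨k, hk⟩ := h2
      refine ⟨k, ?_⟩
      have : j (i0 k) = u' r * (u r)⁻¹ := hk
      rw [this]
      group
    choose d hd using hex
    have hcom : ∀ (r : R) (m : N), i0 (d r) * m = m * i0 (d r) := by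
      intro r m
      obtain ⟨n, rfl⟩ := (Δ r : MulAut N).surjective m
      apply hj
      rw [map_mul, map_mul]
      have h1 := huΔ r n
      have h2 := hu'Δ r n
      rw [hd r] at h2
      have h3 : j ((Δ r : MulAut N) n) =
          j (i0 (d r)) * (u r * j n * (u r)⁻¹) * (j (i0 (d r)))⁻¹ := by
        rw [h2]; group
      rw [← h1] at h3
      have h4 : j (i0 (d r)) * j ((Δ r : MulAut N) n) =
          j ((Δ r : MulAut N) n) * j (i0 (d r)) := by
        conv_rhs => rw [h3]
        group
      exact h4
    have hdc : ∀ r : R, d r ∈ Subgroup.center K := by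
      intro r
      rw [Subgroup.mem_center_iff]
      intro g
      apply hi0
      rw [map_mul, map_mul, ← hcom r (i0 g)]
    refine ⟨fun r => ⟨d r, hdc r⟩, ?_, ?_, ?_⟩
    · refine Subtype.ext ?_
      show d 1 = 1
      apply hi0
      apply hj
      have h1 := hd 1
      rw [hu'1, hu1, mul_one] at h1
      rw [← h1]
      simp
    · intro r p
      exact (hfix_iff ⟨d r, hdc r⟩).mpr (fun n => hcom r n) p
    · intro r
      exact hd r

end IES
end
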